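/- arXiv:1904.10113 — 2 statements merged into one kernel-verified Lean document; each statement's English description precedes it below -/
import Mathlib

section
/- Consider the forced-move cops-and-robbers game on a toroidal grid C_n □ C_n with a straight-ahead orientation. Let K be a conflux and consider a position of the game, with the robber to move, in which there is one cop on each main corner of K and the robber occupies a vertex of K whose in-neighbourhood is not contained in K. Then the two corner cops have a strategy guaranteeing that the robber is captured or is confined to a stream containing K. -/
namespace CopsPaper
set_option linter.unusedSectionVars false
set_option linter.unusedVariables false

/-! ## Generic cops-and-robbers machinery.

A cop strategy is a function from the list of robber positions seen so far to
the new cop positions.  Quantifying over all (legal) robber position sequences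
is equivalent to quantifying over all robber strategies. -/

/-- A lazy step in a digraph: stay put or move along an arc. -/
def Step {α : Type*} (A : α → α → Prop) (u v : α) : Prop := u = v ∨ A u v

/-- The cop positions induced by a cop strategy `σ` against the robber
trajectory `rob`, in the game where the cops move first:
`cops 0 = σ []` are the initial positions, and the cops' `(t+1)`-st positions
are chosen after seeing `rob 0, …, rob t`. -/
def playCops {α ι : Type*} (σ : List α → ι → α) (rob : ℕ → α) (t : ℕ) : ι → α :=
  σ ((List.range t).map rob)

/-- `k` cops have a winning strategy in the cops-and-robbers game on the
digraph with arc relation `A` (both cops and robber may stay put or move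
along an arc on their turn; the cops choose their positions first, the robber
then chooses any starting vertex, and the cops win if at some moment a cop
occupies the robber's vertex). -/
def CopsWin {α : Type*} (A : α → α → Prop) (k : ℕ) : Prop :=
  ∃ σ : List α → Fin k → α,
    ∀ rob : ℕ → α, (∀ t, Step A (rob t) (rob (t + 1))) →
      (∀ t i, Step A (playCops σ rob t i) (playCops σ rob (t + 1) i)) ∧
      ∃ t, ∃ i, playCops σ rob t i = rob t ∨ playCops σ rob (t + 1) i = rob t

/-- The cop number of a digraph. -/
noncomputable def copNumber {α : Type*} (A : α → α → Prop) : ℕ :=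
  sInf {k | CopsWin A k}

/-- Cop positions in a game played from a given position: the cops start at
`c₀`, the robber moves first, and the cops' `(t+1)`-st positions are chosen
after seeing `rob 0, …, rob (t+1)`. -/
def copsFrom {α ι : Type*} (σ : List α → ι → α) (c₀ : ι → α) (rob : ℕ → α) :
    ℕ → ι → α
  | 0 => c₀
  | t + 1 => σ ((List.range (t + 2)).map rob)

/-- The robber is captured in the position game (robber moves first):
either a cop moves onto the robber's current vertex, or the robber moves
onto a cop. -/
def Captured {α ι : Type*} (cops : ℕ → ι → α) (rob : ℕ → α) : Prop :=
  ∃ t, ∃ i, cops t i = rob t ∨ cops t i = rob (t + 1)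

/-- From the position with cops at `c₀`, robber at `r₀` and the robber to
move (cops stepping lazily along `A`, robber stepping along `R`), the cops can
guarantee `Goal` (a predicate of the resulting cop and robber trajectories). -/
def EnsureFrom {α ι : Type*} (A R : α → α → Prop) (c₀ : ι → α) (r₀ : α)
    (Goal : (ℕ → ι → α) → (ℕ → α) → Prop) : Prop :=
  ∃ σ : List α → ι → α,
    ∀ rob : ℕ → α, rob 0 = r₀ → (∀ t, R (rob t) (rob (t + 1))) →
      (∀ t i, Step A (copsFrom σ c₀ rob t i) (copsFrom σ c₀ rob (t + 1) i)) ∧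
      Goal (copsFrom σ c₀ rob) rob

/-- The robber is captured in the game where the cops move first. -/
def CapturedG {α ι : Type*} (cops : ℕ → ι → α) (rob : ℕ → α) : Prop :=
  ∃ t, ∃ i, cops t i = rob t ∨ cops (t + 1) i = rob t

/-- In the game on the digraph `A` (cops choose their starting vertices first,
robber steps along `R`), `k` cops can guarantee `Goal`. -/
def EnsureGame {α : Type*} (A R : α → α → Prop) (k : ℕ)
    (Goal : (ℕ → Fin k → α) → (ℕ → α) → Prop) : Prop :=
  ∃ σ : List α → Fin k → α,
    ∀ rob : ℕ → α, (∀ t, R (rob t) (rob (t + 1))) →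
      (∀ t i, Step A (playCops σ rob t i) (playCops σ rob (t + 1) i)) ∧
      Goal (playCops σ rob) rob

/-- `u` can reach `v` in at most `m` (lazy) moves along the digraph `A`. -/
def ReachIn {α : Type*} (A : α → α → Prop) (m : ℕ) (u v : α) : Prop :=
  ∃ f : ℕ → α, f 0 = u ∧ f m = v ∧ ∀ t, t < m → Step A (f t) (f (t + 1))

/-! ## The toroidal grid `Cₙ □ Cₙ` with a straight-ahead orientation. -/

/-- Vertices of the toroidal grid. -/
abbrev Vtx (n : ℕ) := ZMod n × ZMod n

/-- `a` is `1` or `-1`. -/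
def PM (a : ℤ) : Prop := a = 1 ∨ a = -1

/-- The straight-ahead orientation of `Cₙ □ Cₙ` determined by `δ, ε`:
the out-neighbours of `(x, y)` are `(x + δ y, y)` and `(x, y + ε x)`. -/
def Adj {n : ℕ} (δ ε : ZMod n → ℤ) (p q : Vtx n) : Prop :=
  (q.1 = p.1 + (δ p.2 : ZMod n) ∧ q.2 = p.2) ∨
  (q.1 = p.1 ∧ q.2 = p.2 + (ε p.1 : ZMod n))

/-- The out-neighbour of `p` along its column (the first coordinate moves). -/
def vOut {n : ℕ} (δ : ZMod n → ℤ) (p : Vtx n) : Vtx n :=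
  (p.1 + (δ p.2 : ZMod n), p.2)

/-- The out-neighbour of `p` along its row (the second coordinate moves). -/
def hOut {n : ℕ} (ε : ZMod n → ℤ) (p : Vtx n) : Vtx n :=
  (p.1, p.2 + (ε p.1 : ZMod n))

/-- The type `τ(p) = (δ y, ε x)` of a vertex `p = (x, y)`. -/
def ty {n : ℕ} (δ ε : ZMod n → ℤ) (p : Vtx n) : ℤ × ℤ := (δ p.2, ε p.1)

/-- The direction `u - w` of the main diagonal of a vertex. -/
def mdDir {n : ℕ} (δ ε : ZMod n → ℤ) (p : Vtx n) : ℤ × ℤ := (δ p.2, -(ε p.1))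

/-- The secondary diagonal `SD(p) = {p + r·τ(p) : r ∈ ℤ}`. -/
def SD {n : ℕ} (δ ε : ZMod n → ℤ) (p : Vtx n) : Set (Vtx n) :=
  {q | ∃ r : ℤ, q.1 = p.1 + ((r * δ p.2 : ℤ) : ZMod n) ∧
                q.2 = p.2 + ((r * ε p.1 : ℤ) : ZMod n)}

/-- The main diagonal `MD(p) = {p + r·(u - w) : r ∈ ℤ}` where `u, w` are the
out-neighbours of `p`. -/
def MD {n : ℕ} (δ ε : ZMod n → ℤ) (p : Vtx n) : Set (Vtx n) :=
  {q | ∃ r : ℤ, q.1 = p.1 + ((r * δ p.2 : ℤ) : ZMod n) ∧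
                q.2 = p.2 - ((r * ε p.1 : ℤ) : ZMod n)}

/-- An element of `{1, -1}² ⊆ ℤ²`. -/
def IsType (d : ℤ × ℤ) : Prop := (d.1 = 1 ∨ d.1 = -1) ∧ (d.2 = 1 ∨ d.2 = -1)

/-- Orthogonality in `ℤ²`. -/
def Orth (a b : ℤ × ℤ) : Prop := a.1 * b.1 + a.2 * b.2 = 0

/-! ### Streams -/

/-- A stream: a set of consecutive columns (`vert = true`, lines indexed by
the second coordinate, with constant `δ`) or consecutive rows (`vert = false`,
lines indexed by the first coordinate, with constant `ε`), all oriented in the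
same direction, starting at index `a` and of width `w`. -/
structure Strm (n : ℕ) (δ ε : ZMod n → ℤ) where
  vert : Bool
  a : ZMod n
  w : ℕ
  one_le : 1 ≤ w
  le_n : w ≤ n
  const : ∀ i : ℕ, i < w →
    (if vert then δ else ε) (a + (i : ZMod n)) = (if vert then δ else ε) a

namespace Strm

variable {n : ℕ} {δ ε : ZMod n → ℤ}

/-- The coordinate of a vertex indexing the lines of the stream's kind. -/
def proj (S : Strm n δ ε) (p : Vtx n) : ZMod n := if S.vert then p.2 else p.1

/-- The vertex set `V(S)` of a stream. -/
def verts (S : Strm n δ ε) : Set (Vtx n) :=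
  {p | ∃ i : ℕ, i < S.w ∧ S.proj p = S.a + (i : ZMod n)}

/-- The common direction of the lines of a stream. -/
def dir (S : Strm n δ ε) : ℤ := (if S.vert then δ else ε) S.a

/-- The stream is maximal: it cannot be extended by a line on either side. -/
def IsMax (S : Strm n δ ε) : Prop :=
  S.w = n ∨ ((if S.vert then δ else ε) (S.a - 1) ≠ (if S.vert then δ else ε) S.a ∧
             (if S.vert then δ else ε) (S.a + (S.w : ZMod n)) ≠ (if S.vert then δ else ε) S.a)

/-- The vertex of the line of the stream's kind with index `b` closest to `p`. -/
def cl (S : Strm n δ ε) (b : ZMod n) (p : Vtx n) : Vtx n :=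
  if S.vert then (p.1, b) else (b, p.2)

end Strm

/-- The largest width of a stream in the grid. -/
noncomputable def maxW (n : ℕ) (δ ε : ZMod n → ℤ) : ℕ :=
  sSup {w | ∃ S : Strm n δ ε, S.w = w}

/-- The vertices of the substream `S'` of `S` formed by the lines of `S` at
distance at least `m - 1` from its boundary lines, where `m = ⌊w(S)/3⌋ + 1`. -/
def innerVerts {n : ℕ} {δ ε : ZMod n → ℤ} (S : Strm n δ ε) : Set (Vtx n) :=
  {p | ∃ i : ℕ, S.w / 3 ≤ i ∧ i + S.w / 3 ≤ S.w - 1 ∧ S.proj p = S.a + (i : ZMod n)}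

/-- The cyclic distance between two elements of `ZMod n`. -/
def cdist {n : ℕ} (a b : ZMod n) : ℕ := min (b - a).val (a - b).val

/-! ### Confluxes, corners and guard posts -/

/-- Adjacency in the underlying (undirected) grid. -/
def UAdj {n : ℕ} (δ ε : ZMod n → ℤ) (p q : Vtx n) : Prop := Adj δ ε p q ∨ Adj δ ε q p

/-- Number of neighbours of `v` inside `K`. -/
noncomputable def nbrCount {n : ℕ} (δ ε : ZMod n → ℤ) (K : Set (Vtx n)) (v : Vtx n) : ℕ :=
  {u ∈ K | UAdj δ ε v u}.ncard

/-- Number of out-neighbours of `v` inside `K`. -/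
noncomputable def outCount {n : ℕ} (δ ε : ZMod n → ℤ) (K : Set (Vtx n)) (v : Vtx n) : ℕ :=
  {u ∈ K | Adj δ ε v u}.ncard

/-- A corner of `K`: a vertex of `K` with the minimum number of neighbours in `K`. -/
def Corner {n : ℕ} (δ ε : ZMod n → ℤ) (K : Set (Vtx n)) (v : Vtx n) : Prop :=
  v ∈ K ∧ ∀ u ∈ K, nbrCount δ ε K v ≤ nbrCount δ ε K u

/-- A main corner of `K`: when `K` has four corners, a corner with an odd
number of out-neighbours in `K`; when `K` has at most two corners, every
corner is main. -/
def MainCorner {n : ℕ} (δ ε : ZMod n → ℤ) (K : Set (Vtx n)) (v : Vtx n) : Prop :=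
  Corner δ ε K v ∧ ({u | Corner δ ε K u}.ncard ≤ 2 ∨ Odd (outCount δ ε K v))

/-- A secondary corner of `K` without out-neighbours in `K`. -/
def SecNoOut {n : ℕ} (δ ε : ZMod n → ℤ) (K : Set (Vtx n)) (v : Vtx n) : Prop :=
  Corner δ ε K v ∧ ¬ MainCorner δ ε K v ∧ ∀ u ∈ K, ¬ Adj δ ε v u

/-- The terminal corner of `K`: a corner with no out-neighbours in `K`. -/
def TermCorner {n : ℕ} (δ ε : ZMod n → ℤ) (K : Set (Vtx n)) (v : Vtx n) : Prop :=
  Corner δ ε K v ∧ ∀ u ∈ K, ¬ Adj δ ε v u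

/-- The vertical guard post of `K`: the vertical out-neighbour of the main
corner of `K` whose vertical edge leaves `K` (but no other edge leaves `K`,
unless `K` has only one vertex). -/
def IsVGuard {n : ℕ} (δ ε : ZMod n → ℤ) (K : Set (Vtx n)) (g : Vtx n) : Prop :=
  ∃ v, MainCorner δ ε K v ∧ vOut δ v ∉ K ∧ (K = {v} ∨ hOut ε v ∈ K) ∧ g = vOut δ v

/-- The horizontal guard post of `K`. -/
def IsHGuard {n : ℕ} (δ ε : ZMod n → ℤ) (K : Set (Vtx n)) (g : Vtx n) : Prop :=
  ∃ v, MainCorner δ ε K v ∧ hOut ε v ∉ K ∧ (K = {v} ∨ vOut δ v ∈ K) ∧ g = hOut ε v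

/-- The terminal guard post of a (maximal) conflux `K`: the vertex outside `K`
with the same out-neighbours as the terminal corner of `K`. -/
def IsTermGuard {n : ℕ} (δ ε : ZMod n → ℤ) (K : Set (Vtx n)) (g : Vtx n) : Prop :=
  g ∉ K ∧ ∃ c, TermCorner δ ε K c ∧
    ({vOut δ g, hOut ε g} : Set (Vtx n)) = {vOut δ c, hOut ε c}

/-- The number of steps needed to reach the boundary of `K` from `p`, moving
repeatedly by `st` (the boundary is reached when the next step exits `K`). -/
noncomputable def exitDist {n : ℕ} (K : Set (Vtx n)) (p : Vtx n) (st : ℤ × ℤ) : ℕ :=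
  sInf {m : ℕ |
    (p.1 + ((((m + 1 : ℕ) : ℤ) * st.1 : ℤ) : ZMod n),
     p.2 + ((((m + 1 : ℕ) : ℤ) * st.2 : ℤ) : ZMod n)) ∉ K}

/-! ### Maximal confluxes, escape distances and shadows -/

/-- `y` and `y'` index lines of the same maximal stream (for the direction
function `f`): `f` is constant on a cyclic interval containing both. -/
def SameBlock {n : ℕ} (f : ZMod n → ℤ) (y y' : ZMod n) : Prop :=
  (∃ m : ℕ, y' = y + (m : ZMod n) ∧ ∀ i : ℕ, i ≤ m → f (y + (i : ZMod n)) = f y) ∨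
  (∃ m : ℕ, y = y' + (m : ZMod n) ∧ ∀ i : ℕ, i ≤ m → f (y' + (i : ZMod n)) = f y')

/-- The maximal conflux containing `p`. -/
def maxConflux {n : ℕ} (δ ε : ZMod n → ℤ) (p : Vtx n) : Set (Vtx n) :=
  {q | SameBlock ε q.1 p.1 ∧ SameBlock δ q.2 p.2}

/-- The horizontal escape distance: the length of a shortest directed path
from `p` to a vertex outside its maximal conflux using only arcs that change
the first coordinate. -/
noncomputable def HE {n : ℕ} (δ ε : ZMod n → ℤ) (p : Vtx n) : ℕ :=
  sInf {m : ℕ | (p.1 + (((m : ℤ) * δ p.2 : ℤ) : ZMod n), p.2) ∉ maxConflux δ ε p}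

/-- The vertical escape distance. -/
noncomputable def VE {n : ℕ} (δ ε : ZMod n → ℤ) (p : Vtx n) : ℕ :=
  sInf {m : ℕ | (p.1, p.2 + (((m : ℤ) * ε p.1 : ℤ) : ZMod n)) ∉ maxConflux δ ε p}

/-- `w` is a main shadow of `v`. -/
def IsMainShadow {n : ℕ} (δ ε : ZMod n → ℤ) (v w : Vtx n) : Prop :=
  w ∈ MD δ ε v ∧ ty δ ε w = ty δ ε v ∧ VE δ ε v = HE δ ε w

/-- `w` is a secondary shadow of `v`. -/
def IsSecShadow {n : ℕ} (δ ε : ZMod n → ℤ) (v w : Vtx n) : Prop :=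
  w ∈ SD δ ε v ∧ ty δ ε w = -(ty δ ε v) ∧ VE δ ε v = HE δ ε w

/-- `w` is a diagonal shadow of `v`. -/
def IsDiagShadow {n : ℕ} (δ ε : ZMod n → ℤ) (v w : Vtx n) : Prop :=
  IsMainShadow δ ε v w ∨ IsSecShadow δ ε v w

/-! ### `k`-regular orientations and the conflux digraph -/

/-- `f` is, after the cyclic offset `c`, constant on consecutive blocks of `k`
indices with adjacent blocks taking opposite values in `{1, -1}`.  A
straight-ahead orientation is `k`-regularly oriented iff `2k ∣ n` and both `δ`
and `ε` satisfy this for some offset. -/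
def BlockAltAt {n : ℕ} (k : ℕ) (f : ZMod n → ℤ) (c : ZMod n) : Prop :=
  ∀ m : ℕ, f (c + (m : ZMod n)) = if m / k % 2 = 0 then 1 else -1

/-- The alternating direction function of the conflux digraph
(a 1-regularly oriented grid). -/
def altF (m : ℕ) : ZMod m → ℤ := fun q => if q.val % 2 = 0 then 1 else -1

/-- The index of the block (of length `k`, after offset `c`) containing `x`. -/
def blk {n : ℕ} (k : ℕ) (c x : ZMod n) : ZMod (n / k) :=
  (((x - c).val / k : ℕ) : ZMod (n / k))

/-- The projection sending a vertex of a `k`-regularly oriented grid to the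
vertex of the conflux digraph corresponding to its maximal conflux. -/
def confMap {n : ℕ} (k : ℕ) (cδ cε : ZMod n) (p : Vtx n) : Vtx (n / k) :=
  (blk k cε p.1, blk k cδ p.2)

/-- The translated main diagonal `MD_s(v, d) = {x : x - s·(τ(v)+d)/2 ∈ MD(v)}`. -/
def MDs {n : ℕ} (δ ε : ZMod n → ℤ) (s : ℕ) (v : Vtx n) (d : ℤ × ℤ) : Set (Vtx n) :=
  {x | (x.1 - (((s : ℤ) * (((ty δ ε v).1 + d.1) / 2) : ℤ) : ZMod n),
        x.2 - (((s : ℤ) * (((ty δ ε v).2 + d.2) / 2) : ℤ) : ZMod n)) ∈ MD δ ε v}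

/-- The diagonal distance `𝔡(u, v)` between vertices of opposite types. -/
noncomputable def ddist {n : ℕ} (δ ε : ZMod n → ℤ) (u v : Vtx n) : ℕ :=
  sInf {t : ℕ | ∃ d : ℤ × ℤ, IsType d ∧ Orth (ty δ ε u) d ∧ v ∈ MDs δ ε t u d}

/-- The set `B(u, v) = ⋃_{i ≤ 𝔡(u,v)} MD_i(u, d)`, where `d` is chosen so that
`v ∈ MD_{𝔡(u,v)}(u, d)`. -/
noncomputable def BSet {n : ℕ} (δ ε : ZMod n → ℤ) (u v : Vtx n) : Set (Vtx n) :=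
  {x | ∃ d : ℤ × ℤ, IsType d ∧ Orth (ty δ ε u) d ∧ v ∈ MDs δ ε (ddist δ ε u v) u d ∧
       ∃ i : ℕ, i ≤ ddist δ ε u v ∧ x ∈ MDs δ ε i u d}

/-! ### Mirrors -/

/-- The mirror of the diagonal shadow given by a robber at `v` and a cop at `c`:
the diagonal line through `(v₁, c₂)` with direction `d`. -/
def MirrorOf {n : ℕ} (v c : Vtx n) (d : ℤ × ℤ) : Set (Vtx n) :=
  {p | ∃ r : ℤ, p.1 = v.1 + ((r * d.1 : ℤ) : ZMod n) ∧ p.2 = c.2 + ((r * d.2 : ℤ) : ZMod n)}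

/-- Translation of a set of grid vertices by an integer vector. -/
def shiftSet {n : ℕ} (w : ℤ × ℤ) (L : Set (Vtx n)) : Set (Vtx n) :=
  (fun p : Vtx n => (p.1 + (w.1 : ZMod n), p.2 + (w.2 : ZMod n))) '' L



/-! ## Auxiliary machinery for the proof of `trap_one`. -/

section Interval

variable {n : ℕ}

/-- Membership in the cyclic interval starting at `a` of width `w`. -/
def MemI (a : ZMod n) (w : ℕ) (y : ZMod n) : Prop :=
  ∃ i : ℕ, i < w ∧ y = a + (i : ZMod n)

/-- First (entry) element of the interval w.r.t. direction `d`. -/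
def fstIx (a : ZMod n) (w : ℕ) (d : ℤ) : ZMod n :=
  if d = 1 then a else a + ((w - 1 : ℕ) : ZMod n)

/-- Last (exit) element of the interval w.r.t. direction `d`. -/
def lstIx (a : ZMod n) (w : ℕ) (d : ℤ) : ZMod n :=
  if d = 1 then a + ((w - 1 : ℕ) : ZMod n) else a

variable [NeZero n]

lemma natCast_inj' {i j : ℕ} (hi : i < n) (hj : j < n)
    (h : (i : ZMod n) = (j : ZMod n)) : i = j := by
  have := congrArg ZMod.val h
  rwa [ZMod.val_cast_of_lt hi, ZMod.val_cast_of_lt hj] at this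

lemma natCast_ne_zero' {i : ℕ} (h0 : 0 < i) (hi : i < n) : (i : ZMod n) ≠ 0 := by
  intro h
  have := (ZMod.natCast_eq_zero_iff i n).1 h
  have := Nat.le_of_dvd h0 this
  omega

lemma succ_mem {a : ZMod n} {w : ℕ} {y : ZMod n} (hw : w ≤ n)
    (hy : MemI a w y) (hne : y ≠ a + ((w - 1 : ℕ) : ZMod n)) : MemI a w (y + 1) := by
  obtain ⟨i, hi, rfl⟩ := hy
  have hiw : i ≠ w - 1 := by
    intro h; exact hne (by rw [h])
  refine ⟨i + 1, by omega, ?_⟩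
  push_cast; ring

lemma pred_mem {a : ZMod n} {w : ℕ} {y : ZMod n} (hw : w ≤ n)
    (hy : MemI a w y) (hne : y ≠ a) : MemI a w (y - 1) := by
  obtain ⟨i, hi, rfl⟩ := hy
  have hi0 : i ≠ 0 := by
    intro h; subst h; exact hne (by simp)
  refine ⟨i - 1, by omega, ?_⟩
  have : ((i - 1 : ℕ) : ZMod n) + 1 = (i : ZMod n) := by
    have : (i - 1) + 1 = i := by omega
    calc ((i - 1 : ℕ) : ZMod n) + 1 = (((i - 1) + 1 : ℕ) : ZMod n) := by push_cast; ring
    _ = (i : ZMod n) := by rw [this]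
  rw [← this]; ring

lemma top_succ_not {a : ZMod n} {w : ℕ} (hw : w < n) (h1 : 1 ≤ w) :
    ¬ MemI a w (a + ((w - 1 : ℕ) : ZMod n) + 1) := by
  rintro ⟨i, hi, h⟩
  have h2 : ((w - 1 + 1 : ℕ) : ZMod n) = (i : ZMod n) := by
    push_cast
    have := h
    linear_combination h - this + this - h + (by linear_combination h : a + ((w-1:ℕ) : ZMod n) + 1 = a + (i : ZMod n))
  have : w - 1 + 1 = i := natCast_inj' (by omega) (by omega) h2
  omega

lemma bot_pred_not {a : ZMod n} {w : ℕ} (hw : w < n) :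
    ¬ MemI a w (a - 1) := by
  rintro ⟨i, hi, h⟩
  have h2 : ((i + 1 : ℕ) : ZMod n) = 0 := by
    push_cast
    linear_combination h - h + (by linear_combination -h : (i : ZMod n) + 1 = 0)
  exact natCast_ne_zero' (by omega) (by omega) h2

end Interval


section IntervalD

set_option linter.unusedSectionVars false

variable {n : ℕ} [NeZero n] {a y : ZMod n} {w : ℕ} {d : ℤ}

lemma memI_one_le (hy : MemI a w y) : 1 ≤ w := by
  obtain ⟨i, hi, _⟩ := hy; omega

lemma mem_fstIx (h1 : 1 ≤ w) : MemI a w (fstIx a w d) := by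
  unfold fstIx; split
  · exact ⟨0, h1, by simp⟩
  · exact ⟨w - 1, by omega, rfl⟩

lemma mem_lstIx (h1 : 1 ≤ w) : MemI a w (lstIx a w d) := by
  unfold lstIx; split
  · exact ⟨w - 1, by omega, rfl⟩
  · exact ⟨0, h1, by simp⟩

lemma step_memI (hw : w ≤ n) (hd : PM d) (hy : MemI a w y)
    (hne : y ≠ lstIx a w d) : MemI a w (y + (d : ZMod n)) := by
  rcases hd with h | h <;> subst h
  · rw [lstIx, if_pos rfl] at hne
    simpa using succ_mem hw hy hne
  · rw [lstIx, if_neg (by norm_num)] at hne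
    have : y + ((-1 : ℤ) : ZMod n) = y - 1 := by push_cast; ring
    rw [this]; exact pred_mem hw hy hne

lemma back_memI (hw : w ≤ n) (hd : PM d) (hy : MemI a w y)
    (hne : y ≠ fstIx a w d) : MemI a w (y - (d : ZMod n)) := by
  rcases hd with h | h <;> subst h
  · rw [fstIx, if_pos rfl] at hne
    have : y - ((1 : ℤ) : ZMod n) = y - 1 := by push_cast; ring
    rw [this]; exact pred_mem hw hy hne
  · rw [fstIx, if_neg (by norm_num)] at hne
    have : y - ((-1 : ℤ) : ZMod n) = y + 1 := by push_cast; ring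
    rw [this]; exact succ_mem hw hy hne

lemma lst_add_not (hw : w < n) (h1 : 1 ≤ w) (hd : PM d) :
    ¬ MemI a w (lstIx a w d + (d : ZMod n)) := by
  rcases hd with h | h <;> subst h
  · rw [lstIx, if_pos rfl]
    simpa using top_succ_not hw h1
  · rw [lstIx, if_neg (by norm_num)]
    have : a + ((-1 : ℤ) : ZMod n) = a - 1 := by push_cast; ring
    rw [this]; exact bot_pred_not hw

lemma fst_sub_not (hw : w < n) (h1 : 1 ≤ w) (hd : PM d) :
    ¬ MemI a w (fstIx a w d - (d : ZMod n)) := by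
  rcases hd with h | h <;> subst h
  · rw [fstIx, if_pos rfl]
    have : a - ((1 : ℤ) : ZMod n) = a - 1 := by push_cast; ring
    rw [this]; exact bot_pred_not hw
  · rw [fstIx, if_neg (by norm_num)]
    have : a + ((w - 1 : ℕ) : ZMod n) - ((-1 : ℤ) : ZMod n)
        = a + ((w - 1 : ℕ) : ZMod n) + 1 := by push_cast; ring
    rw [this]; exact top_succ_not hw h1

lemma exit_eq_lst (hw : w ≤ n) (hd : PM d) (hy : MemI a w y)
    (hno : ¬ MemI a w (y + (d : ZMod n))) : y = lstIx a w d := by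
  by_contra h; exact hno (step_memI hw hd hy h)

lemma enter_eq_fst (hw : w ≤ n) (hd : PM d) (hy : MemI a w y)
    (hno : ¬ MemI a w (y - (d : ZMod n))) : y = fstIx a w d := by
  by_contra h; exact hno (back_memI hw hd hy h)

lemma memI_w1 (h : w = 1) (hy : MemI a w y) : y = a := by
  obtain ⟨i, hi, rfl⟩ := hy
  have : i = 0 := by omega
  simp [this]

lemma fstIx_w1 (h : w = 1) : fstIx a w d = a := by
  unfold fstIx; split <;> simp [h]

lemma lstIx_w1 (h : w = 1) : lstIx a w d = a := by
  unfold lstIx; split <;> simp [h]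

lemma two_le_of_ne_lst (hy : MemI a w y) (hne : y ≠ lstIx a w d) : 2 ≤ w := by
  have h1 := memI_one_le hy
  by_contra h
  have hw1 : w = 1 := by omega
  exact hne ((memI_w1 hw1 hy).trans (lstIx_w1 hw1).symm)

lemma two_le_of_ne_fst (hy : MemI a w y) (hne : y ≠ fstIx a w d) : 2 ≤ w := by
  have h1 := memI_one_le hy
  by_contra h
  have hw1 : w = 1 := by omega
  exact hne ((memI_w1 hw1 hy).trans (fstIx_w1 hw1).symm)

lemma fst_ne_lst (hw : w ≤ n) (h2 : 2 ≤ w) (hd : PM d) :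
    fstIx a w d ≠ lstIx a w d := by
  have key : a ≠ a + ((w - 1 : ℕ) : ZMod n) := by
    intro h
    have : ((w - 1 : ℕ) : ZMod n) = 0 := by linear_combination -h
    exact natCast_ne_zero' (by omega) (by omega) this
  rcases hd with h | h <;> subst h
  · rw [fstIx, if_pos rfl, lstIx, if_pos rfl]; exact key
  · rw [fstIx, if_neg (by norm_num), lstIx, if_neg (by norm_num)]; exact key.symm

lemma pm_cast_ne_zero (h2 : 2 ≤ n) (hd : PM d) : ((d : ZMod n)) ≠ 0 := by
  haveI : Fact (1 < n) := ⟨h2⟩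
  rcases hd with h | h <;> subst h <;> simp

lemma pm_two_cast_ne_zero (h3 : 3 ≤ n) (hd : PM d) : (d : ZMod n) + (d : ZMod n) ≠ 0 := by
  have h2 : ((2 : ℕ) : ZMod n) ≠ 0 := natCast_ne_zero' (by omega) (by omega)
  rcases hd with h | h <;> subst h
  · intro h; exact h2 (by push_cast; linear_combination h)
  · intro h; exact h2 (by push_cast; linear_combination -h)

end IntervalD

section StrmChar

variable {n : ℕ} {δ ε : ZMod n → ℤ}

lemma verts_true (S : Strm n δ ε) (h : S.vert = true) (p : Vtx n) :
    p ∈ S.verts ↔ MemI S.a S.w p.2 := by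
  simp [Strm.verts, Strm.proj, h, MemI]

lemma verts_false (S : Strm n δ ε) (h : S.vert = false) (p : Vtx n) :
    p ∈ S.verts ↔ MemI S.a S.w p.1 := by
  simp [Strm.verts, Strm.proj, h, MemI]

lemma const_true (S : Strm n δ ε) (h : S.vert = true) {y : ZMod n}
    (hy : MemI S.a S.w y) : δ y = δ S.a := by
  obtain ⟨i, hi, rfl⟩ := hy
  have := S.const i hi
  rw [h] at this; simpa using this

lemma const_false (S : Strm n δ ε) (h : S.vert = false) {x : ZMod n}
    (hx : MemI S.a S.w x) : ε x = ε S.a := by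
  obtain ⟨i, hi, rfl⟩ := hx
  have := S.const i hi
  rw [h] at this; simpa using this

end StrmChar


section Swap

variable {n : ℕ} {δ ε : ZMod n → ℤ}

lemma adj_swap (p q : Vtx n) : Adj δ ε p q ↔ Adj ε δ p.swap q.swap := by
  simp only [Adj, Prod.swap, Prod.fst, Prod.snd]
  tauto

lemma uadj_swap (p q : Vtx n) : UAdj δ ε p q ↔ UAdj ε δ p.swap q.swap := by
  unfold UAdj
  rw [adj_swap p q, adj_swap q p]

/-- The coordinate swap of a stream. -/
def Strm.swapStrm (S : Strm n δ ε) : Strm n ε δ where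
  vert := !S.vert
  a := S.a
  w := S.w
  one_le := S.one_le
  le_n := S.le_n
  const := by
    intro i hi
    have := S.const i hi
    cases hS : S.vert <;> rw [hS] at this <;> simp [hS] <;> simpa using this

lemma mem_swap_verts (S : Strm n δ ε) (p : Vtx n) :
    p ∈ (S.swapStrm).verts ↔ p.swap ∈ S.verts := by
  cases hS : S.vert
  · rw [verts_true S.swapStrm (by simp [Strm.swapStrm, hS]), verts_false S hS]
    exact Iff.rfl
  · rw [verts_false S.swapStrm (by simp [Strm.swapStrm, hS]), verts_true S hS]
    exact Iff.rfl

lemma ncard_swap_preimage (A : Set (Vtx n)) : (Prod.swap ⁻¹' A).ncard = A.ncard := by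
  rw [← Set.image_swap_eq_preimage_swap, Set.ncard_image_of_injective _ Prod.swap_injective]

lemma nbr_swap (K : Set (Vtx n)) (v : Vtx n) :
    nbrCount ε δ (Prod.swap ⁻¹' K) v = nbrCount δ ε K v.swap := by
  unfold nbrCount
  have h : {u | u ∈ Prod.swap ⁻¹' K ∧ UAdj ε δ v u}
      = Prod.swap ⁻¹' {u | u ∈ K ∧ UAdj δ ε v.swap u} := by
    ext u
    simp only [Set.mem_setOf_eq, Set.mem_preimage]
    constructor
    · rintro ⟨h1, h2⟩
      exact ⟨h1, by rw [← uadj_swap (δ := ε) (ε := δ)] at *; exact h2⟩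
    · rintro ⟨h1, h2⟩
      refine ⟨h1, ?_⟩
      rw [uadj_swap (δ := ε) (ε := δ)]
      exact h2
  rw [h, ncard_swap_preimage]

lemma out_swap (K : Set (Vtx n)) (v : Vtx n) :
    outCount ε δ (Prod.swap ⁻¹' K) v = outCount δ ε K v.swap := by
  unfold outCount
  have h : {u | u ∈ Prod.swap ⁻¹' K ∧ Adj ε δ v u}
      = Prod.swap ⁻¹' {u | u ∈ K ∧ Adj δ ε v.swap u} := by
    ext u
    simp only [Set.mem_setOf_eq, Set.mem_preimage]
    constructor
    · rintro ⟨h1, h2⟩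
      exact ⟨h1, by rw [adj_swap (δ := ε) (ε := δ)] at h2; exact h2⟩
    · rintro ⟨h1, h2⟩
      refine ⟨h1, ?_⟩
      rw [adj_swap (δ := ε) (ε := δ)]
      exact h2
  rw [h, ncard_swap_preimage]

lemma corner_swap (K : Set (Vtx n)) (v : Vtx n) :
    Corner ε δ (Prod.swap ⁻¹' K) v ↔ Corner δ ε K v.swap := by
  unfold Corner
  constructor
  · rintro ⟨h1, h2⟩
    refine ⟨h1, fun u hu => ?_⟩
    have := h2 u.swap (by simpa using hu)
    rwa [nbr_swap, nbr_swap, Prod.swap_swap] at this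
  · rintro ⟨h1, h2⟩
    refine ⟨h1, fun u hu => ?_⟩
    rw [nbr_swap, nbr_swap]
    exact h2 u.swap hu

lemma cornerSet_swap (K : Set (Vtx n)) :
    {u | Corner ε δ (Prod.swap ⁻¹' K) u} = Prod.swap ⁻¹' {u | Corner δ ε K u} := by
  ext u
  simp only [Set.mem_setOf_eq, Set.mem_preimage]
  exact corner_swap K u

lemma mainCorner_swap (K : Set (Vtx n)) (v : Vtx n) :
    MainCorner ε δ (Prod.swap ⁻¹' K) v ↔ MainCorner δ ε K v.swap := by
  unfold MainCorner
  rw [corner_swap, out_swap, cornerSet_swap, ncard_swap_preimage]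

end Swap

section AdjChar

variable {n : ℕ} {δ ε : ZMod n → ℤ}

lemma adj_char (p q : Vtx n) : Adj δ ε p q ↔
    q = (p.1 + ((δ p.2 : ℤ) : ZMod n), p.2) ∨ q = (p.1, p.2 + ((ε p.1 : ℤ) : ZMod n)) := by
  unfold Adj
  rw [Prod.ext_iff, Prod.ext_iff]

lemma uadj_char (p q : Vtx n) : UAdj δ ε p q ↔
    q = (p.1 + ((δ p.2 : ℤ) : ZMod n), p.2) ∨ q = (p.1 - ((δ p.2 : ℤ) : ZMod n), p.2) ∨
    q = (p.1, p.2 + ((ε p.1 : ℤ) : ZMod n)) ∨ q = (p.1, p.2 - ((ε p.1 : ℤ) : ZMod n)) := by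
  unfold UAdj Adj
  constructor
  · rintro ((⟨h1, h2⟩ | ⟨h1, h2⟩) | (⟨h1, h2⟩ | ⟨h1, h2⟩))
    · exact Or.inl (Prod.ext_iff.2 ⟨h1, h2⟩)
    · exact Or.inr (Or.inr (Or.inl (Prod.ext_iff.2 ⟨h1, h2⟩)))
    · refine Or.inr (Or.inl (Prod.ext_iff.2 ⟨?_, h2.symm⟩))
      rw [h1, ← h2]; ring
    · refine Or.inr (Or.inr (Or.inr (Prod.ext_iff.2 ⟨h1.symm, ?_⟩)))
      rw [h2, h1]; ring
  · rintro (rfl | rfl | rfl | rfl)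
    · exact Or.inl (Or.inl ⟨rfl, rfl⟩)
    · exact Or.inr (Or.inl ⟨by ring, rfl⟩)
    · exact Or.inl (Or.inr ⟨rfl, rfl⟩)
    · exact Or.inr (Or.inr ⟨rfl, by ring⟩)

end AdjChar


section CornerLemma

variable {n : ℕ} [NeZero n] {δ ε : ZMod n → ℤ}

/-- The vertex `(x_exit, y_entry)` is a main corner of the conflux. -/
lemma mainCorner_exit_entry
    (hδ : ∀ y, PM (δ y)) (hε : ∀ x, PM (ε x))
    (S₁ S₂ : Strm n δ ε) (h₁ : S₁.vert = true) (h₂ : S₂.vert = false)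
    (K : Set (Vtx n)) (hK : K = S₁.verts ∩ S₂.verts)
    (hW : S₂.w < n) (hH : S₁.w < n) :
    MainCorner δ ε K (lstIx S₂.a S₂.w (δ S₁.a), fstIx S₁.a S₁.w (ε S₂.a)) := by
  classical
  set a₁ := S₁.a with ha₁
  set a₂ := S₂.a with ha₂
  set H := S₁.w with hHw
  set W := S₂.w with hWw
  set d₁ := δ S₁.a with hd₁def
  set d₂ := ε S₂.a with hd₂def
  have hd₁ : PM d₁ := hδ _
  have hd₂ : PM d₂ := hε _
  have hW1 : 1 ≤ W := S₂.one_le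
  have hH1 : 1 ≤ H := S₁.one_le
  have hWn : W ≤ n := S₂.le_n
  have hHn : H ≤ n := S₁.le_n
  have hn2 : 2 ≤ n := by omega
  set xe := lstIx a₂ W d₁ with hxe
  set ye := fstIx a₁ H d₂ with hye
  have memK : ∀ p : Vtx n, p ∈ K ↔ MemI a₁ H p.2 ∧ MemI a₂ W p.1 := by
    intro p
    rw [hK, Set.mem_inter_iff, verts_true S₁ h₁, verts_false S₂ h₂]
  have hδK : ∀ {y : ZMod n}, MemI a₁ H y → δ y = d₁ := fun hy => const_true S₁ h₁ hy
  have hεK : ∀ {x : ZMod n}, MemI a₂ W x → ε x = d₂ := fun hx => const_false S₂ h₂ hx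
  have hvK : (xe, ye) ∈ K := (memK _).2 ⟨mem_fstIx hH1, mem_lstIx hW1⟩
  have e1 : δ ye = d₁ := hδK (mem_fstIx hH1)
  have e2 : ε xe = d₂ := hεK (mem_lstIx hW1)
  set m : ℕ := (if 2 ≤ W then 1 else 0) + (if 2 ≤ H then 1 else 0) with hm
  -- lower bound
  have hlow : ∀ u ∈ K, m ≤ nbrCount δ ε K u := by
    intro u hu
    obtain ⟨hq, hp⟩ := (memK u).1 hu
    have hvert : 2 ≤ W → ∃ z, (z ∈ K ∧ UAdj δ ε u z) ∧ z.1 ≠ u.1 ∧ z.2 = u.2 := by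
      intro h2
      by_cases hL : u.1 = lstIx a₂ W d₁
      · refine ⟨(u.1 - ((d₁ : ℤ) : ZMod n), u.2), ⟨?_, ?_⟩, ?_, rfl⟩
        · exact (memK _).2 ⟨hq, back_memI hWn hd₁ hp
            (by rw [hL]; exact (fst_ne_lst hWn h2 hd₁).symm)⟩
        · exact (uadj_char _ _).2 (Or.inr (Or.inl (by rw [hδK hq])))
        · intro h
          exact pm_cast_ne_zero hn2 hd₁ (by linear_combination -h)
      · refine ⟨(u.1 + ((d₁ : ℤ) : ZMod n), u.2), ⟨?_, ?_⟩, ?_, rfl⟩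
        · exact (memK _).2 ⟨hq, step_memI hWn hd₁ hp hL⟩
        · exact (uadj_char _ _).2 (Or.inl (by rw [hδK hq]))
        · intro h
          exact pm_cast_ne_zero hn2 hd₁ (by linear_combination h)
    have hhor : 2 ≤ H → ∃ z, (z ∈ K ∧ UAdj δ ε u z) ∧ z.1 = u.1 ∧ z.2 ≠ u.2 := by
      intro h2
      by_cases hL : u.2 = lstIx a₁ H d₂
      · refine ⟨(u.1, u.2 - ((d₂ : ℤ) : ZMod n)), ⟨?_, ?_⟩, rfl, ?_⟩
        · exact (memK _).2 ⟨back_memI hHn hd₂ hq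
            (by rw [hL]; exact (fst_ne_lst hHn h2 hd₂).symm), hp⟩
        · exact (uadj_char _ _).2 (Or.inr (Or.inr (Or.inr (by rw [hεK hp]))))
        · intro h
          exact pm_cast_ne_zero hn2 hd₂ (by linear_combination -h)
      · refine ⟨(u.1, u.2 + ((d₂ : ℤ) : ZMod n)), ⟨?_, ?_⟩, rfl, ?_⟩
        · exact (memK _).2 ⟨step_memI hHn hd₂ hq hL, hp⟩
        · exact (uadj_char _ _).2 (Or.inr (Or.inr (Or.inl (by rw [hεK hp]))))
        · intro h
          exact pm_cast_ne_zero hn2 hd₂ (by linear_combination h)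
    have hfin : {z | z ∈ K ∧ UAdj δ ε u z}.Finite := Set.toFinite _
    unfold nbrCount
    by_cases hW2 : 2 ≤ W <;> by_cases hH2 : 2 ≤ H
    · obtain ⟨z₁, hz₁, hz₁1, _⟩ := hvert hW2
      obtain ⟨z₂, hz₂, hz₂1, _⟩ := hhor hH2
      have hne : z₁ ≠ z₂ := by
        intro h; rw [h, hz₂1] at hz₁1; exact hz₁1 rfl
      have h2 : 1 < {z | z ∈ K ∧ UAdj δ ε u z}.ncard :=
        (Set.one_lt_ncard_iff hfin).2 ⟨z₁, z₂, hz₁, hz₂, hne⟩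
      simp only [hm, if_pos hW2, if_pos hH2]
      omega
    · obtain ⟨z₁, hz₁, _, _⟩ := hvert hW2
      have h2 : 0 < {z | z ∈ K ∧ UAdj δ ε u z}.ncard :=
        (Set.ncard_pos hfin).2 ⟨z₁, hz₁⟩
      simp only [hm, if_pos hW2, if_neg hH2]
      omega
    · obtain ⟨z₂, hz₂, _, _⟩ := hhor hH2
      have h2 : 0 < {z | z ∈ K ∧ UAdj δ ε u z}.ncard :=
        (Set.ncard_pos hfin).2 ⟨z₂, hz₂⟩
      simp only [hm, if_neg hW2, if_pos hH2]
      omega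
    · simp only [hm, if_neg hW2, if_neg hH2]
      omega
  -- upper bound
  have hup : nbrCount δ ε K (xe, ye) ≤ m := by
    set Tset : Set (Vtx n) :=
      (if 2 ≤ W then {(xe - ((d₁ : ℤ) : ZMod n), ye)} else (∅ : Set (Vtx n))) ∪
      (if 2 ≤ H then {(xe, ye + ((d₂ : ℤ) : ZMod n))} else (∅ : Set (Vtx n))) with hT
    have hsub : {z | z ∈ K ∧ UAdj δ ε (xe, ye) z} ⊆ Tset := by
      rintro z ⟨hzK, hzA⟩
      rcases (uadj_char (xe, ye) z).1 hzA with rfl | rfl | rfl | rfl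
      · exfalso
        have hzp : MemI a₂ W (xe + ((δ ye : ℤ) : ZMod n)) := ((memK _).1 hzK).2
        rw [e1] at hzp
        exact lst_add_not hW hW1 hd₁ hzp
      · have hzp : MemI a₂ W (xe - ((δ ye : ℤ) : ZMod n)) := ((memK _).1 hzK).2
        rw [e1] at hzp
        have hW2 : 2 ≤ W := by
          by_contra h
          have hw1 : W = 1 := by omega
          have heq : fstIx a₂ W d₁ - ((d₁ : ℤ) : ZMod n) = xe - ((d₁ : ℤ) : ZMod n) := by
            rw [fstIx_w1 hw1, hxe, lstIx_w1 hw1]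
          exact fst_sub_not hW hW1 hd₁ (by rw [heq]; exact hzp)
        apply Set.mem_union_left
        rw [if_pos hW2]
        show ((xe, ye).1 - ((δ (xe, ye).2 : ℤ) : ZMod n), (xe, ye).2)
            ∈ ({(xe - ((d₁ : ℤ) : ZMod n), ye)} : Set (Vtx n))
        rw [Set.mem_singleton_iff, Prod.ext_iff]
        refine ⟨?_, rfl⟩
        show xe - ((δ ye : ℤ) : ZMod n) = xe - ((d₁ : ℤ) : ZMod n)
        rw [e1]
      · have hzq : MemI a₁ H (ye + ((ε xe : ℤ) : ZMod n)) := ((memK _).1 hzK).1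
        rw [e2] at hzq
        have hH2 : 2 ≤ H := by
          by_contra h
          have hw1 : H = 1 := by omega
          have heq : lstIx a₁ H d₂ + ((d₂ : ℤ) : ZMod n) = ye + ((d₂ : ℤ) : ZMod n) := by
            rw [lstIx_w1 hw1, hye, fstIx_w1 hw1]
          exact lst_add_not hH hH1 hd₂ (by rw [heq]; exact hzq)
        apply Set.mem_union_right
        rw [if_pos hH2]
        show ((xe, ye).1, (xe, ye).2 + ((ε (xe, ye).1 : ℤ) : ZMod n))
            ∈ ({(xe, ye + ((d₂ : ℤ) : ZMod n))} : Set (Vtx n))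
        rw [Set.mem_singleton_iff, Prod.ext_iff]
        refine ⟨rfl, ?_⟩
        show ye + ((ε xe : ℤ) : ZMod n) = ye + ((d₂ : ℤ) : ZMod n)
        rw [e2]
      · exfalso
        have hzq : MemI a₁ H (ye - ((ε xe : ℤ) : ZMod n)) := ((memK _).1 hzK).1
        rw [e2] at hzq
        exact fst_sub_not hH hH1 hd₂ hzq
    have hTcard : Tset.ncard ≤ m := by
      rw [hT, hm]
      by_cases hW2 : 2 ≤ W <;> by_cases hH2 : 2 ≤ H
      · rw [if_pos hW2, if_pos hH2, Set.singleton_union]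
        have h3 := Set.ncard_insert_le (xe - ((d₁ : ℤ) : ZMod n), ye)
          ({(xe, ye + ((d₂ : ℤ) : ZMod n))} : Set (Vtx n))
        simp only [Set.ncard_singleton] at h3
        simp only [if_pos hW2, if_pos hH2]
        omega
      · rw [if_pos hW2, if_neg hH2, Set.union_empty, Set.ncard_singleton]
        simp [hW2, hH2]
      · rw [if_neg hW2, if_pos hH2, Set.empty_union, Set.ncard_singleton]
        simp [hW2, hH2]
      · rw [if_neg hW2, if_neg hH2, Set.union_empty]
        simp [hW2, hH2]
    calc nbrCount δ ε K (xe, ye) ≤ Tset.ncard :=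
          Set.ncard_le_ncard hsub (Set.toFinite _)
      _ ≤ m := hTcard
  have hcor : Corner δ ε K (xe, ye) := ⟨hvK, fun u hu => le_trans hup (hlow u hu)⟩
  refine ⟨hcor, ?_⟩
  by_cases hH2 : 2 ≤ H
  · right
    have hout : {z | z ∈ K ∧ Adj δ ε (xe, ye) z} = {(xe, ye + ((d₂ : ℤ) : ZMod n))} := by
      ext z
      simp only [Set.mem_setOf_eq, Set.mem_singleton_iff]
      constructor
      · rintro ⟨hzK, hzA⟩
        rcases (adj_char (xe, ye) z).1 hzA with rfl | rfl
        · exfalso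
          have hzp : MemI a₂ W (xe + ((δ ye : ℤ) : ZMod n)) := ((memK _).1 hzK).2
          rw [e1] at hzp
          exact lst_add_not hW hW1 hd₁ hzp
        · show ((xe, ye).1, (xe, ye).2 + ((ε (xe, ye).1 : ℤ) : ZMod n))
            = (xe, ye + ((d₂ : ℤ) : ZMod n))
          rw [Prod.ext_iff]
          refine ⟨rfl, ?_⟩
          show ye + ((ε xe : ℤ) : ZMod n) = ye + ((d₂ : ℤ) : ZMod n)
          rw [e2]
      · rintro rfl
        refine ⟨(memK _).2 ⟨step_memI hHn hd₂ (mem_fstIx hH1)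
          (fst_ne_lst hHn hH2 hd₂), mem_lstIx hW1⟩, ?_⟩
        refine (adj_char _ _).2 (Or.inr ?_)
        show (xe, ye + ((d₂ : ℤ) : ZMod n))
            = ((xe, ye).1, (xe, ye).2 + ((ε (xe, ye).1 : ℤ) : ZMod n))
        rw [Prod.ext_iff]
        refine ⟨rfl, ?_⟩
        show ye + ((d₂ : ℤ) : ZMod n) = ye + ((ε xe : ℤ) : ZMod n)
        rw [e2]
    unfold outCount
    rw [hout, Set.ncard_singleton]
    exact odd_one
  · left
    have hh1 : H = 1 := by omega
    have hyea : ye = a₁ := fstIx_w1 hh1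
    have hsub2 : {u | Corner δ ε K u} ⊆ {(fstIx a₂ W d₁, ye), (xe, ye)} := by
      intro u hu
      obtain ⟨huK, humin⟩ := hu
      obtain ⟨hq, hp⟩ := (memK u).1 huK
      have hu2 : u.2 = ye := by rw [hyea]; exact memI_w1 hh1 hq
      have hcases : u.1 = fstIx a₂ W d₁ ∨ u.1 = xe := by
        by_contra hcon
        push_neg at hcon
        obtain ⟨hne1, hne2⟩ := hcon
        have hW2 : 2 ≤ W := two_le_of_ne_lst hp hne2
        have hn3 : 3 ≤ n := by omega
        have hz₁ : (u.1 + ((d₁ : ℤ) : ZMod n), u.2) ∈ K :=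
          (memK _).2 ⟨hq, step_memI hWn hd₁ hp hne2⟩
        have hz₂ : (u.1 - ((d₁ : ℤ) : ZMod n), u.2) ∈ K :=
          (memK _).2 ⟨hq, back_memI hWn hd₁ hp hne1⟩
        have hA₁ : UAdj δ ε u (u.1 + ((d₁ : ℤ) : ZMod n), u.2) :=
          (uadj_char _ _).2 (Or.inl (by rw [hδK hq]))
        have hA₂ : UAdj δ ε u (u.1 - ((d₁ : ℤ) : ZMod n), u.2) :=
          (uadj_char _ _).2 (Or.inr (Or.inl (by rw [hδK hq])))
        have hnz : (u.1 + ((d₁ : ℤ) : ZMod n), u.2) ≠ (u.1 - ((d₁ : ℤ) : ZMod n), u.2) := by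
          intro h
          rw [Prod.ext_iff] at h
          exact pm_two_cast_ne_zero hn3 hd₁ (by linear_combination h.1)
        have h2le : 1 < nbrCount δ ε K u :=
          (Set.one_lt_ncard_iff (Set.toFinite _)).2
            ⟨_, _, ⟨hz₁, hA₁⟩, ⟨hz₂, hA₂⟩, hnz⟩
        have hle1 : nbrCount δ ε K u ≤ m := le_trans (humin _ hvK) hup
        rw [hm] at hle1
        simp only [if_pos hW2, if_neg hH2] at hle1
        omega
      rw [Set.mem_insert_iff, Set.mem_singleton_iff]
      rcases hcases with h | h
      · left; rw [Prod.ext_iff]; exact ⟨h, hu2⟩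
      · right; rw [Prod.ext_iff]; exact ⟨h, hu2⟩
    calc {u | Corner δ ε K u}.ncard
        ≤ ({(fstIx a₂ W d₁, ye), (xe, ye)} : Set (Vtx n)).ncard :=
          Set.ncard_le_ncard hsub2 (Set.toFinite _)
      _ ≤ 2 := by
          have h3 := Set.ncard_insert_le (fstIx a₂ W d₁, ye) ({(xe, ye)} : Set (Vtx n))
          simp only [Set.ncard_singleton] at h3
          omega

end CornerLemma


section Machinery

open scoped Classical

/-- Cop trajectory computed from the reversed history of robber positions,
following the update rule `u` with a safety fallback (stay put if the
prescribed move would be illegal). -/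
noncomputable def Gfb {α : Type*} (A : α → α → Prop) (c0 : α) (u : α → α → α → α) :
    List α → α
  | [] => c0
  | [_] => c0
  | r' :: r :: rest =>
      let c := Gfb A c0 u (r :: rest)
      if Step A c (u c r r') then u c r r' else c

variable {α : Type*}

lemma rev_map_range_succ (rob : ℕ → α) (t : ℕ) :
    ((List.range (t + 1)).map rob).reverse = rob t :: ((List.range t).map rob).reverse := by
  rw [List.range_succ, List.map_append, List.reverse_append]
  simp

lemma Gfb_zero (A : α → α → Prop) (c0 : α) (u : α → α → α → α) (rob : ℕ → α) :
    Gfb A c0 u (((List.range 1).map rob).reverse) = c0 := by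
  have h : ((List.range 1).map rob).reverse = [rob 0] := by
    have : List.range 1 = [0] := rfl
    rw [this]
    simp
  rw [h]
  rfl

lemma Gfb_succ (A : α → α → Prop) (c0 : α) (u : α → α → α → α) (rob : ℕ → α) (t : ℕ) :
    Gfb A c0 u (((List.range (t + 2)).map rob).reverse) =
      (if Step A (Gfb A c0 u (((List.range (t + 1)).map rob).reverse))
          (u (Gfb A c0 u (((List.range (t + 1)).map rob).reverse)) (rob t) (rob (t + 1)))
        then u (Gfb A c0 u (((List.range (t + 1)).map rob).reverse)) (rob t) (rob (t + 1))
        else Gfb A c0 u (((List.range (t + 1)).map rob).reverse)) := by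
  rw [rev_map_range_succ rob (t + 1), rev_map_range_succ rob t]
  rfl

lemma Gfb_step (A : α → α → Prop) (c0 : α) (u : α → α → α → α) (rob : ℕ → α) (t : ℕ) :
    Step A (Gfb A c0 u (((List.range (t + 1)).map rob).reverse))
      (Gfb A c0 u (((List.range (t + 2)).map rob).reverse)) := by
  rw [Gfb_succ]
  split_ifs with h
  · exact h
  · exact Or.inl rfl

end Machinery


section CaseA

open scoped Classical

/-- Mirroring cop rule: stay on row `xe`, mirror the robber's column. -/
def updMirror {n : ℕ} (xe : ZMod n) : Vtx n → Vtx n → Vtx n → Vtx n :=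
  fun _ _ r' => (xe, r'.2)

/-- Waiting cop rule: wait until column-aligned with the robber, then stay on
row `xnt` and mirror the robber's column. -/
def updWait {n : ℕ} (xnt : ZMod n) : Vtx n → Vtx n → Vtx n → Vtx n :=
  fun c r r' => if c.2 = r.2 then (xnt, r'.2) else c

variable {n : ℕ} [NeZero n]

lemma caseA (δ ε : ZMod n → ℤ)
    (hδ : ∀ y, PM (δ y)) (hε : ∀ x, PM (ε x))
    (S₁ S₂ : Strm n δ ε) (h₁ : S₁.vert = true) (h₂ : S₂.vert = false)
    (K : Set (Vtx n)) (hK : K = S₁.verts ∩ S₂.verts)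
    (hW : S₂.w < n) (hH : S₁.w < n)
    (r₀ : Vtx n) (hr : r₀ ∈ K)
    (hcol : (r₀.1, r₀.2 - ((ε r₀.1 : ℤ) : ZMod n)) ∉ K) :
    EnsureFrom (Adj δ ε) (Adj δ ε)
      (fun i : {v : Vtx n // MainCorner δ ε K v} => i.val) r₀
      (fun cops rob => Captured cops rob ∨
        ∃ S : Strm n δ ε, K ⊆ S.verts ∧ ∃ T, ∀ t, T ≤ t → rob t ∈ S.verts) := by
  classical
  set a₁ := S₁.a with ha₁
  set a₂ := S₂.a with ha₂
  set H := S₁.w with hHw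
  set W := S₂.w with hWw
  set d₁ := δ S₁.a with hd₁def
  set d₂ := ε S₂.a with hd₂def
  have hd₁ : PM d₁ := hδ _
  have hd₂ : PM d₂ := hε _
  have hW1 : 1 ≤ W := S₂.one_le
  have hH1 : 1 ≤ H := S₁.one_le
  have hWn : W ≤ n := S₂.le_n
  have hHn : H ≤ n := S₁.le_n
  set xe := lstIx a₂ W d₁ with hxe
  set xnt := fstIx a₂ W d₁ with hxnt
  set yex := lstIx a₁ H d₂ with hyex
  set yen := fstIx a₁ H d₂ with hyen
  set c1v : Vtx n := (xe, yen) with hc1v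
  set c2v : Vtx n := (xnt, yex) with hc2v
  have memK : ∀ p : Vtx n, p ∈ K ↔ MemI a₁ H p.2 ∧ MemI a₂ W p.1 := by
    intro p
    rw [hK, Set.mem_inter_iff, verts_true S₁ h₁, verts_false S₂ h₂]
  have hδK : ∀ {y : ZMod n}, MemI a₁ H y → δ y = d₁ := fun hy => const_true S₁ h₁ hy
  have hεK : ∀ {x : ZMod n}, MemI a₂ W x → ε x = d₂ := fun hx => const_false S₂ h₂ hx
  have e2 : ε xe = d₂ := hεK (mem_lstIx hW1)
  have e2' : ε xnt = d₂ := hεK (mem_fstIx hW1)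
  -- the two cops are main corners
  have mc1 : MainCorner δ ε K c1v :=
    mainCorner_exit_entry hδ hε S₁ S₂ h₁ h₂ K hK hW hH
  have mc2 : MainCorner δ ε K c2v := by
    have hv1 : (S₂.swapStrm).vert = true := by simp [Strm.swapStrm, h₂]
    have hv2 : (S₁.swapStrm).vert = false := by simp [Strm.swapStrm, h₁]
    have hK' : Prod.swap ⁻¹' K = (S₂.swapStrm).verts ∩ (S₁.swapStrm).verts := by
      ext p
      rw [Set.mem_preimage, Set.mem_inter_iff, mem_swap_verts, mem_swap_verts, hK,
        Set.mem_inter_iff]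
      tauto
    have h := mainCorner_exit_entry (δ := ε) (ε := δ) hε hδ S₂.swapStrm S₁.swapStrm
      hv1 hv2 (Prod.swap ⁻¹' K) hK' hH hW
    have h2 := (mainCorner_swap (δ := δ) (ε := ε) K _).1 h
    exact h2
  -- the robber starts on the entry column
  have hx0 : MemI a₂ W r₀.1 := ((memK r₀).1 hr).2
  have hy0 : MemI a₁ H r₀.2 := ((memK r₀).1 hr).1
  have hyen0 : r₀.2 = yen := by
    refine enter_eq_fst hHn hd₂ hy0 ?_
    intro hmem
    apply hcol
    refine (memK _).2 ⟨?_, hx0⟩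
    show MemI a₁ H (r₀.2 - ((ε r₀.1 : ℤ) : ZMod n))
    rw [hεK hx0]
    exact hmem
  -- the strategy
  set u1 := updMirror (n := n) xe with hu1
  set u2 := updWait (n := n) xnt with hu2
  set σ : List (Vtx n) → {v : Vtx n // MainCorner δ ε K v} → Vtx n :=
    fun l i =>
      if i.val = c1v then Gfb (Adj δ ε) c1v u1 l.reverse
      else if i.val = c2v then Gfb (Adj δ ε) c2v u2 l.reverse
      else i.val
    with hσ
  refine ⟨σ, ?_⟩
  intro rob hrob0 hmove
  set i₁ : {v : Vtx n // MainCorner δ ε K v} := ⟨c1v, mc1⟩ with hi₁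
  set i₂ : {v : Vtx n // MainCorner δ ε K v} := ⟨c2v, mc2⟩ with hi₂
  set c₀ : {v : Vtx n // MainCorner δ ε K v} → Vtx n := fun i => i.val with hc₀
  set cops1 : ℕ → Vtx n :=
    fun t => Gfb (Adj δ ε) c1v u1 (((List.range (t + 1)).map rob).reverse) with hcops1
  set cops2 : ℕ → Vtx n :=
    fun t => Gfb (Adj δ ε) c2v u2 (((List.range (t + 1)).map rob).reverse) with hcops2
  have hc10 : cops1 0 = c1v := Gfb_zero _ _ _ _
  have hc20 : cops2 0 = c2v := Gfb_zero _ _ _ _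
  have hrec1 : ∀ t, cops1 (t + 1) =
      (if Step (Adj δ ε) (cops1 t) (u1 (cops1 t) (rob t) (rob (t + 1)))
        then u1 (cops1 t) (rob t) (rob (t + 1)) else cops1 t) :=
    fun t => Gfb_succ _ _ _ rob t
  have hrec2 : ∀ t, cops2 (t + 1) =
      (if Step (Adj δ ε) (cops2 t) (u2 (cops2 t) (rob t) (rob (t + 1)))
        then u2 (cops2 t) (rob t) (rob (t + 1)) else cops2 t) :=
    fun t => Gfb_succ _ _ _ rob t
  have hstep1 : ∀ t, Step (Adj δ ε) (cops1 t) (cops1 (t + 1)) :=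
    fun t => Gfb_step _ _ _ rob t
  have hstep2 : ∀ t, Step (Adj δ ε) (cops2 t) (cops2 (t + 1)) :=
    fun t => Gfb_step _ _ _ rob t
  -- bridges between `copsFrom` and the trajectories
  have hbr1 : ∀ t, copsFrom σ c₀ rob t i₁ = cops1 t := by
    intro t
    cases t with
    | zero => exact hc10.symm
    | succ t =>
        show σ ((List.range (t + 2)).map rob) i₁ = cops1 (t + 1)
        simp only [hσ]
        rw [if_pos (rfl : (i₁ : Vtx n) = c1v)]
  have hbr2 : c1v ≠ c2v → ∀ t, copsFrom σ c₀ rob t i₂ = cops2 t := by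
    intro hne t
    cases t with
    | zero => exact hc20.symm
    | succ t =>
        show σ ((List.range (t + 2)).map rob) i₂ = cops2 (t + 1)
        simp only [hσ]
        rw [if_neg (fun h => hne h.symm), if_pos (rfl : (i₂ : Vtx n) = c2v)]
  have hbr20 : copsFrom σ c₀ rob 0 i₂ = c2v := rfl
  have hbr3 : ∀ (i : {v : Vtx n // MainCorner δ ε K v}), i.val ≠ c1v → i.val ≠ c2v →
      ∀ t, copsFrom σ c₀ rob t i = i.val := by
    intro i hi1 hi2 t
    cases t with
    | zero => rfl
    | succ t =>
        show σ ((List.range (t + 2)).map rob) i = i.val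
        simp only [hσ]
        rw [if_neg hi1, if_neg hi2]
  constructor
  · -- legality of the cops' moves
    intro t i
    by_cases hi1 : i.val = c1v
    · have hii : i = i₁ := Subtype.ext hi1
      rw [hii, hbr1 t, hbr1 (t + 1)]
      exact hstep1 t
    · by_cases hi2 : i.val = c2v
      · have hne : c1v ≠ c2v := fun h => hi1 (hi2.trans h.symm)
        have hii : i = i₂ := Subtype.ext hi2
        rw [hii, hbr2 hne t, hbr2 hne (t + 1)]
        exact hstep2 t
      · rw [hbr3 i hi1 hi2 t, hbr3 i hi1 hi2 (t + 1)]
        exact Or.inl rfl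
  · -- the goal: capture or confinement
    by_cases hcap : Captured (copsFrom σ c₀ rob) rob
    · exact Or.inl hcap
    · right
      have hnc : ∀ t (i : {v : Vtx n // MainCorner δ ε K v}),
          copsFrom σ c₀ rob t i ≠ rob t ∧ copsFrom σ c₀ rob t i ≠ rob (t + 1) :=
        fun t i => ⟨fun h => hcap ⟨t, i, Or.inl h⟩, fun h => hcap ⟨t, i, Or.inr h⟩⟩
      set Algn : ℕ → Prop := fun t => ∃ s, s ≤ t ∧ (rob s).2 = yex with hAlgn
      have hAmono : ∀ t, Algn t → Algn (t + 1) := by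
        rintro t ⟨s, hs, h⟩
        exact ⟨s, by omega, h⟩
      have Inv : ∀ t, cops1 t = (xe, (rob t).2) ∧ MemI a₂ W (rob t).1 ∧ (rob t).1 ≠ xe ∧
          (¬ Algn t → MemI a₁ H (rob t).2 ∧ cops2 t = c2v) ∧
          (Algn t → (rob t).1 ≠ xnt ∧ cops2 t = (xnt, (rob t).2)) := by
        intro t
        induction t with
        | zero =>
            refine ⟨?_, ?_, ?_, ?_, ?_⟩
            · rw [hc10, hc1v, hrob0, hyen0]
            · rw [hrob0]; exact hx0
            · rw [hrob0]
              intro h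
              apply (hnc 0 i₁).1
              have h0 : copsFrom σ c₀ rob 0 i₁ = c1v := rfl
              rw [h0, hrob0, hc1v]
              exact Prod.ext h.symm hyen0.symm
            · intro _
              exact ⟨by rw [hrob0]; exact hy0, hc20⟩
            · intro hal
              obtain ⟨s, hs, hsy⟩ := hal
              have hs0 : s = 0 := by omega
              subst hs0
              constructor
              · intro h
                apply (hnc 0 i₂).1
                rw [hbr20, hc2v]
                exact Prod.ext h.symm hsy.symm
              · rw [hc20, hc2v, hsy]
        | succ t ih =>
            obtain ⟨ih1, ih2, ih3, ih4, ih5⟩ := ih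
            have hW2 : 2 ≤ W := two_le_of_ne_lst ih2 ih3
            have hneC : c1v ≠ c2v := by
              intro h
              have h1 : xe = xnt := congrArg Prod.fst h
              exact fst_ne_lst hWn hW2 hd₁ h1.symm
            have hcop1t : copsFrom σ c₀ rob t i₁ = (xe, (rob t).2) := (hbr1 t).trans ih1
            rcases (adj_char (rob t) (rob (t + 1))).1 (hmove t) with hmv | hmv
            · -- vertical move
              have h2eq : (rob (t + 1)).2 = (rob t).2 := by rw [hmv]
              have h1eq : (rob (t + 1)).1 = (rob t).1 + ((δ (rob t).2 : ℤ) : ZMod n) := by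
                rw [hmv]
              have hAiff : Algn (t + 1) ↔ Algn t := by
                constructor
                · rintro ⟨s, hs, h⟩
                  by_cases hst : s ≤ t
                  · exact ⟨s, hst, h⟩
                  · have hseq : s = t + 1 := by omega
                    subst hseq
                    exact ⟨t, le_rfl, by rw [← h2eq]; exact h⟩
                · exact hAmono t
              have hδv : δ (rob t).2 = d₁ ∨ δ (rob t).2 = -d₁ := by
                rcases hδ (rob t).2 with h | h <;> rcases hd₁ with h' | h' <;> omega
              have hx' : MemI a₂ W (rob (t + 1)).1 := by
                by_cases hyI : MemI a₁ H (rob t).2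
                · rw [h1eq, hδK hyI]
                  exact step_memI hWn hd₁ ih2 ih3
                · have hAlt : Algn t := by
                    by_contra h
                    exact hyI (ih4 h).1
                  have hxnt2 : (rob t).1 ≠ xnt := (ih5 hAlt).1
                  rcases hδv with h | h
                  · rw [h1eq, h]
                    exact step_memI hWn hd₁ ih2 ih3
                  · have heq : (rob t).1 + ((δ (rob t).2 : ℤ) : ZMod n)
                        = (rob t).1 - ((d₁ : ℤ) : ZMod n) := by
                      rw [h]; push_cast; ring
                    rw [h1eq, heq]
                    exact back_memI hWn hd₁ ih2 hxnt2
              have hxe' : (rob (t + 1)).1 ≠ xe := by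
                intro h
                apply (hnc t i₁).2
                rw [hcop1t]
                have hre : rob (t + 1) = ((xe, (rob t).2) : Vtx n) := Prod.ext h h2eq
                exact hre.symm
              refine ⟨?_, hx', hxe', ?_, ?_⟩
              · rw [hrec1 t, ih1]
                have hcand : u1 ((xe, (rob t).2) : Vtx n) (rob t) (rob (t + 1))
                    = ((xe, (rob t).2) : Vtx n) := by
                  rw [hu1]; unfold updMirror; rw [h2eq]
                have hst : Step (Adj δ ε) ((xe, (rob t).2) : Vtx n)
                    ((xe, (rob t).2) : Vtx n) := Or.inl rfl
                rw [hcand, if_pos hst, h2eq]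
              · intro hna
                have hnat : ¬ Algn t := fun h => hna (hAiff.2 h)
                obtain ⟨hyI, hc2⟩ := ih4 hnat
                refine ⟨by rw [h2eq]; exact hyI, ?_⟩
                rw [hrec2 t, hc2]
                have hcond : c2v.2 ≠ (rob t).2 := by
                  intro h
                  exact hnat ⟨t, le_rfl, by rw [← h, hc2v]⟩
                have hcand : u2 c2v (rob t) (rob (t + 1)) = c2v := by
                  rw [hu2]; unfold updWait; rw [if_neg hcond]
                have hst : Step (Adj δ ε) c2v c2v := Or.inl rfl
                rw [hcand, if_pos hst]
              · intro hal
                have hAlt : Algn t := hAiff.1 hal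
                obtain ⟨hxnt2, hc2⟩ := ih5 hAlt
                constructor
                · intro h
                  apply (hnc t i₂).2
                  rw [hbr2 hneC t, hc2]
                  have hre : rob (t + 1) = ((xnt, (rob t).2) : Vtx n) := Prod.ext h h2eq
                  exact hre.symm
                · rw [hrec2 t, hc2]
                  have hcand : u2 ((xnt, (rob t).2) : Vtx n) (rob t) (rob (t + 1))
                      = ((xnt, (rob t).2) : Vtx n) := by
                    rw [hu2]; unfold updWait; rw [if_pos rfl, h2eq]
                  have hst : Step (Adj δ ε) ((xnt, (rob t).2) : Vtx n)
                      ((xnt, (rob t).2) : Vtx n) := Or.inl rfl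
                  rw [hcand, if_pos hst, h2eq]
            · -- horizontal move
              have h1eq : (rob (t + 1)).1 = (rob t).1 := by rw [hmv]
              have hεv : ε (rob t).1 = d₂ := hεK ih2
              have h2eq : (rob (t + 1)).2 = (rob t).2 + ((d₂ : ℤ) : ZMod n) := by
                rw [hmv]
                show (rob t).2 + ((ε (rob t).1 : ℤ) : ZMod n) = _
                rw [hεv]
              refine ⟨?_, by rw [h1eq]; exact ih2, by rw [h1eq]; exact ih3, ?_, ?_⟩
              · rw [hrec1 t, ih1]
                have hcand : u1 ((xe, (rob t).2) : Vtx n) (rob t) (rob (t + 1))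
                    = ((xe, (rob (t + 1)).2) : Vtx n) := by
                  rw [hu1]; unfold updMirror
                  rfl
                have hstp : Step (Adj δ ε) ((xe, (rob t).2) : Vtx n)
                    ((xe, (rob (t + 1)).2) : Vtx n) := by
                  refine Or.inr (Or.inr ⟨rfl, ?_⟩)
                  show (rob (t + 1)).2 = (rob t).2 + ((ε xe : ℤ) : ZMod n)
                  rw [h2eq, e2]
                rw [hcand, if_pos hstp]
              · intro hna
                have hnat : ¬ Algn t := fun h => hna (hAmono t h)
                obtain ⟨hyI, hc2⟩ := ih4 hnat
                have hyexne : (rob t).2 ≠ yex := fun h => hnat ⟨t, le_rfl, h⟩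
                refine ⟨by rw [h2eq]; exact step_memI hHn hd₂ hyI hyexne, ?_⟩
                rw [hrec2 t, hc2]
                have hcond : c2v.2 ≠ (rob t).2 := fun h => hnat ⟨t, le_rfl, by rw [← h, hc2v]⟩
                have hcand : u2 c2v (rob t) (rob (t + 1)) = c2v := by
                  rw [hu2]; unfold updWait; rw [if_neg hcond]
                have hst : Step (Adj δ ε) c2v c2v := Or.inl rfl
                rw [hcand, if_pos hst]
              · intro hal
                by_cases hAlt : Algn t
                · obtain ⟨hxnt2, hc2⟩ := ih5 hAlt
                  refine ⟨by rw [h1eq]; exact hxnt2, ?_⟩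
                  rw [hrec2 t, hc2]
                  have hcand : u2 ((xnt, (rob t).2) : Vtx n) (rob t) (rob (t + 1))
                      = ((xnt, (rob (t + 1)).2) : Vtx n) := by
                    rw [hu2]; unfold updWait; rw [if_pos rfl]
                  have hstp : Step (Adj δ ε) ((xnt, (rob t).2) : Vtx n)
                      ((xnt, (rob (t + 1)).2) : Vtx n) := by
                    refine Or.inr (Or.inr ⟨rfl, ?_⟩)
                    show (rob (t + 1)).2 = (rob t).2 + ((ε xnt : ℤ) : ZMod n)
                    rw [h2eq, e2']
                  rw [hcand, if_pos hstp]
                · obtain ⟨hyI, hc2⟩ := ih4 hAlt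
                  have hyext : (rob (t + 1)).2 = yex := by
                    obtain ⟨s, hs, h⟩ := hal
                    by_cases hst : s ≤ t
                    · exact absurd ⟨s, hst, h⟩ hAlt
                    · have hseq : s = t + 1 := by omega
                      subst hseq
                      exact h
                  constructor
                  · intro h
                    apply (hnc t i₂).2
                    rw [hbr2 hneC t, hc2, hc2v]
                    have hre : rob (t + 1) = ((xnt, yex) : Vtx n) := Prod.ext h hyext
                    exact hre.symm
                  · rw [hrec2 t, hc2]
                    have hcond : c2v.2 ≠ (rob t).2 := fun h => hAlt ⟨t, le_rfl, by rw [← h, hc2v]⟩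
                    have hcand : u2 c2v (rob t) (rob (t + 1)) = c2v := by
                      rw [hu2]; unfold updWait; rw [if_neg hcond]
                    have hst : Step (Adj δ ε) c2v c2v := Or.inl rfl
                    rw [hcand, if_pos hst, hc2v, hyext]
      refine ⟨S₂, by rw [hK]; exact Set.inter_subset_right, 0, fun t _ => ?_⟩
      exact (verts_false S₂ h₂ _).2 (Inv t).2.1

end CaseA


section Assemble

variable {n : ℕ} [NeZero n] {δ ε : ZMod n → ℤ}

lemma verts_all (S : Strm n δ ε) (hw : S.w = n) (p : Vtx n) : p ∈ S.verts := by
  refine ⟨(S.proj p - S.a).val, ?_, ?_⟩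
  · rw [hw]; exact ZMod.val_lt _
  · have h := ZMod.natCast_rightInverse (n := n) (S.proj p - S.a)
    rw [h]
    ring

lemma trivial_ensure (K : Set (Vtx n)) (r₀ : Vtx n) (S : Strm n δ ε)
    (hKS : K ⊆ S.verts) (hall : ∀ p : Vtx n, p ∈ S.verts) :
    EnsureFrom (Adj δ ε) (Adj δ ε)
      (fun i : {v : Vtx n // MainCorner δ ε K v} => i.val) r₀
      (fun cops rob => Captured cops rob ∨
        ∃ S' : Strm n δ ε, K ⊆ S'.verts ∧ ∃ T, ∀ t, T ≤ t → rob t ∈ S'.verts) := by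
  refine ⟨fun _ i => i.val, fun rob h0 hR => ⟨?_, Or.inr ⟨S, hKS, 0, fun t _ => hall _⟩⟩⟩
  intro t i
  cases t <;> exact Or.inl rfl

lemma ensure_swap (K : Set (Vtx n)) (r₀ : Vtx n)
    (h : EnsureFrom (Adj ε δ) (Adj ε δ)
      (fun i : {v : Vtx n // MainCorner ε δ (Prod.swap ⁻¹' K) v} => i.val) (Prod.swap r₀)
      (fun cops rob => Captured cops rob ∨
        ∃ S : Strm n ε δ, (Prod.swap ⁻¹' K) ⊆ S.verts ∧ ∃ T, ∀ t, T ≤ t → rob t ∈ S.verts)) :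
    EnsureFrom (Adj δ ε) (Adj δ ε)
      (fun i : {v : Vtx n // MainCorner δ ε K v} => i.val) r₀
      (fun cops rob => Captured cops rob ∨
        ∃ S : Strm n δ ε, K ⊆ S.verts ∧ ∃ T, ∀ t, T ≤ t → rob t ∈ S.verts) := by
  obtain ⟨σ', hσ'⟩ := h
  let eIx : {v : Vtx n // MainCorner δ ε K v} →
      {v : Vtx n // MainCorner ε δ (Prod.swap ⁻¹' K) v} :=
    fun i => ⟨Prod.swap i.val,
      (mainCorner_swap K (Prod.swap i.val)).2
        (by rw [Prod.swap_swap]; exact i.property)⟩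
  refine ⟨fun l i => Prod.swap (σ' (l.map Prod.swap) (eIx i)), ?_⟩
  intro rob h0 hR
  set rob' : ℕ → Vtx n := fun t => Prod.swap (rob t) with hrob'
  have h0' : rob' 0 = Prod.swap r₀ := by
    show Prod.swap (rob 0) = Prod.swap r₀
    rw [h0]
  have hR' : ∀ t, Adj ε δ (rob' t) (rob' (t + 1)) := fun t => (adj_swap _ _).1 (hR t)
  obtain ⟨hleg, hgoal⟩ := hσ' rob' h0' hR'
  have key : ∀ t (i : {v : Vtx n // MainCorner δ ε K v}),
      copsFrom (fun l i => Prod.swap (σ' (l.map Prod.swap) (eIx i)))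
        (fun i => i.val) rob t i
      = Prod.swap (copsFrom σ' (fun j => j.val) rob' t (eIx i)) := by
    intro t i
    cases t with
    | zero =>
        show i.val = Prod.swap (Prod.swap i.val)
        exact (Prod.swap_swap i.val).symm
    | succ t =>
        show Prod.swap (σ' (((List.range (t + 2)).map rob).map Prod.swap) (eIx i)) = _
        rw [List.map_map]
        rfl
  constructor
  · intro t i
    rw [key t i, key (t + 1) i]
    rcases hleg t (eIx i) with hh | hh
    · exact Or.inl (congrArg Prod.swap hh)
    · exact Or.inr ((adj_swap _ _).1 hh)
  · rcases hgoal with hc | ⟨S', hKS', T, hT⟩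
    · left
      obtain ⟨t, j, hj⟩ := hc
      refine ⟨t, ⟨Prod.swap j.val, (mainCorner_swap K j.val).1 j.property⟩, ?_⟩
      have hej : eIx ⟨Prod.swap j.val, (mainCorner_swap K j.val).1 j.property⟩ = j :=
        Subtype.ext (Prod.swap_swap j.val)
      rcases hj with hh | hh
      · left
        rw [key t _, hej, hh]
        exact Prod.swap_swap _
      · right
        rw [key t _, hej, hh]
        exact Prod.swap_swap _
    · right
      refine ⟨S'.swapStrm, ?_, T, ?_⟩
      · intro k hk
        rw [mem_swap_verts]
        apply hKS'
        rw [Set.mem_preimage, Prod.swap_swap]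
        exact hk
      · intro t ht
        rw [mem_swap_verts]
        exact hT t ht

end Assemble

/-- (Lemma `trap1`.)  In the forced-move game, if the cops
occupy all main corners of a conflux `K`, the robber is in `K` and the
in-neighbourhood of the robber's vertex is not contained in `K`, then the cops
can guarantee that the robber is captured or confined to a stream containing
`K`. -/
theorem trap_one
    (n : ℕ) (hn : 1 ≤ n) (δ ε : ZMod n → ℤ)
    (hδ : ∀ y, PM (δ y)) (hε : ∀ x, PM (ε x))
    (S₁ S₂ : Strm n δ ε) (h₁ : S₁.vert = true) (h₂ : S₂.vert = false)
    (K : Set (Vtx n)) (hK : K = S₁.verts ∩ S₂.verts) (hKne : K.Nonempty)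
    (r₀ : Vtx n) (hr : r₀ ∈ K)
    (hin : ∃ u, Adj δ ε u r₀ ∧ u ∉ K) :
    EnsureFrom (Adj δ ε) (Adj δ ε)
      (fun i : {v : Vtx n // MainCorner δ ε K v} => i.val) r₀
      (fun cops rob => Captured cops rob ∨
        ∃ S : Strm n δ ε, K ⊆ S.verts ∧ ∃ T, ∀ t, T ≤ t → rob t ∈ S.verts) := by
  haveI : NeZero n := ⟨by omega⟩
  by_cases hw1 : S₁.w = n
  · exact trivial_ensure K r₀ S₁ (by rw [hK]; exact Set.inter_subset_left) (verts_all S₁ hw1)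
  by_cases hw2 : S₂.w = n
  · exact trivial_ensure K r₀ S₂ (by rw [hK]; exact Set.inter_subset_right) (verts_all S₂ hw2)
  have hW : S₂.w < n := lt_of_le_of_ne S₂.le_n hw2
  have hHlt : S₁.w < n := lt_of_le_of_ne S₁.le_n hw1
  obtain ⟨u, hadj, huK⟩ := hin
  rcases hadj with ⟨hu1, hu2⟩ | ⟨hu1, hu2⟩
  · -- vertical in-neighbour outside `K`: the robber starts on the entry row
    have hu : u = (r₀.1 - ((δ r₀.2 : ℤ) : ZMod n), r₀.2) := by
      have hδe : δ u.2 = δ r₀.2 := by rw [hu2]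
      refine Prod.ext ?_ hu2.symm
      show u.1 = r₀.1 - ((δ r₀.2 : ℤ) : ZMod n)
      rw [hu1, ← hδe]
      ring
    apply ensure_swap K r₀
    have hv1 : (S₂.swapStrm).vert = true := by simp [Strm.swapStrm, h₂]
    have hv2 : (S₁.swapStrm).vert = false := by simp [Strm.swapStrm, h₁]
    have hK' : Prod.swap ⁻¹' K = (S₂.swapStrm).verts ∩ (S₁.swapStrm).verts := by
      ext p
      rw [Set.mem_preimage, Set.mem_inter_iff, mem_swap_verts, mem_swap_verts, hK,
        Set.mem_inter_iff]
      tauto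
    refine caseA ε δ hε hδ S₂.swapStrm S₁.swapStrm hv1 hv2 (Prod.swap ⁻¹' K) hK'
      hHlt hW (Prod.swap r₀)
      (by rw [Set.mem_preimage, Prod.swap_swap]; exact hr) ?_
    intro hmem
    rw [Set.mem_preimage] at hmem
    apply huK
    rw [hu]
    exact hmem
  · -- horizontal in-neighbour outside `K`: the robber starts on the entry column
    have hu : u = (r₀.1, r₀.2 - ((ε r₀.1 : ℤ) : ZMod n)) := by
      have hεe : ε u.1 = ε r₀.1 := by rw [hu1]
      refine Prod.ext hu1.symm ?_
      show u.2 = r₀.2 - ((ε r₀.1 : ℤ) : ZMod n)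
      rw [hu2, ← hεe]
      ring
    exact caseA δ ε hδ hε S₁ S₂ h₁ h₂ K hK hW hHlt r₀ hr (hu ▸ huK)

end CopsPaper
end

section
/- Consider the forced-move cops-and-robbers game on a toroidal grid C_n □ C_n with a straight-ahead orientation. Let K be a conflux and consider a position of the game, with the robber to move, in which there is one cop on each main corner of K, there is a cop on the secondary corner of K without out-neighbours in K if such a corner exists, and the robber occupies a vertex of K. Then these cops have a strategy guaranteeing that the robber is captured or is confined to a stream containing K. -/
namespace CopsPaper

/-! ### Auxiliary development for `trap_two` -/

set_option linter.unusedSectionVars false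
set_option linter.unusedVariables false

section Iv
variable {n : ℕ}

/-- cyclic interval of width `w` starting at `a` -/
def Iv (a : ZMod n) (w : ℕ) : Set (ZMod n) := {z | ∃ i : ℕ, i < w ∧ z = a + (i : ZMod n)}

lemma natCast_inj_lt [NeZero n] {i j : ℕ} (hi : i < n) (hj : j < n)
    (h : (i : ZMod n) = j) : i = j := by
  have := congrArg ZMod.val h
  rwa [ZMod.val_natCast_of_lt hi, ZMod.val_natCast_of_lt hj] at this

lemma add_natCast_inj [NeZero n] {a : ZMod n} {i j : ℕ} (hi : i < n) (hj : j < n)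
    (h : a + (i : ZMod n) = a + j) : i = j :=
  natCast_inj_lt hi hj (by exact add_left_cancel h)

lemma mem_Iv_of_lt {a : ZMod n} {w i : ℕ} (h : i < w) : a + (i : ZMod n) ∈ Iv a w :=
  ⟨i, h, rfl⟩

/-- The endpoint of the interval in direction `s`. -/
def ivE (a : ZMod n) (w : ℕ) (s : ℤ) : ZMod n :=
  if s = 1 then a + ((w - 1 : ℕ) : ZMod n) else a

lemma ivE_one (a : ZMod n) (w : ℕ) : ivE a w 1 = a + ((w - 1 : ℕ) : ZMod n) := if_pos rfl

lemma ivE_neg_one (a : ZMod n) (w : ℕ) : ivE a w (-1) = a := if_neg (by norm_num)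

variable [NeZero n] {a : ZMod n} {w : ℕ} {s : ℤ}

omit [NeZero n] in
lemma ivE_mem (hw : 1 ≤ w) : ivE a w s ∈ Iv a w := by
  unfold ivE; split
  · exact mem_Iv_of_lt (by omega)
  · simpa using mem_Iv_of_lt (a := a) (show 0 < w by omega)

lemma ivE_add_notMem (hw : 1 ≤ w) (hwn : w < n) (hs : s = 1 ∨ s = -1) :
    ivE a w s + ((s : ℤ) : ZMod n) ∉ Iv a w := by
  rcases hs with hs | hs <;> subst hs <;> rintro ⟨i, hi, hz⟩
  · rw [ivE_one] at hz
    rw [show ((1:ℤ) : ZMod n) = ((1:ℕ) : ZMod n) by push_cast; ring,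
      add_assoc, ← Nat.cast_add] at hz
    have := add_natCast_inj (by omega) (by omega) hz.symm
    omega
  · rw [ivE_neg_one] at hz
    have : a + ((0:ℕ) : ZMod n) = a + ((i + 1 : ℕ) : ZMod n) := by
      push_cast at hz ⊢
      rw [← sub_eq_iff_eq_add'] at hz
      rw [add_zero, ← hz]; ring
    have := add_natCast_inj (by omega) (by omega) this
    omega

lemma cast_pred {i : ℕ} (h : 1 ≤ i) : ((i - 1 : ℕ) : ZMod n) = (i : ZMod n) - 1 := by
  have h2 := Nat.cast_sub (R := ZMod n) h
  simpa using h2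

lemma step_mem (hwn : w < n) (hs : s = 1 ∨ s = -1) {z : ZMod n}
    (hz : z ∈ Iv a w) (hne : z ≠ ivE a w s) : z + ((s : ℤ) : ZMod n) ∈ Iv a w := by
  obtain ⟨i, hi, rfl⟩ := hz
  rcases hs with hs | hs <;> subst hs
  · rw [ivE_one] at hne
    have hiw : i ≠ w - 1 := fun h => hne (by rw [h])
    have : a + (i : ZMod n) + ((1:ℤ) : ZMod n) = a + ((i+1 : ℕ) : ZMod n) := by
      push_cast; ring
    rw [this]; exact mem_Iv_of_lt (by omega)
  · rw [ivE_neg_one] at hne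
    have hi0 : i ≠ 0 := fun h => hne (by rw [h]; simp)
    have : a + (i : ZMod n) + ((-1:ℤ) : ZMod n) = a + ((i-1 : ℕ) : ZMod n) := by
      rw [cast_pred (by omega)]; push_cast; ring
    rw [this]; exact mem_Iv_of_lt (by omega)

lemma cast_succ_eq {i j : ℕ} (h : i = j + 1) : ((i : ℕ) : ZMod n) = (j : ZMod n) + 1 := by
  subst h; push_cast; ring

/-- second-from-end membership -/
lemma ivE_sub_mem (hw : 2 ≤ w) (hwn : w < n) (hs : s = 1 ∨ s = -1) :
    ivE a w s + ((-s : ℤ) : ZMod n) ∈ Iv a w := by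
  rcases hs with hs | hs <;> subst hs
  · refine ⟨w - 2, by omega, ?_⟩
    rw [ivE_one, cast_succ_eq (show w - 1 = (w - 2) + 1 by omega)]
    push_cast; ring
  · refine ⟨1, by omega, ?_⟩
    rw [ivE_neg_one]
    push_cast; ring

omit [NeZero n] in
/-- the two ends -/
lemma ends_eq (hs : s = 1 ∨ s = -1) :
    ({ivE a w s, ivE a w (-s)} : Set (ZMod n)) = {a, a + ((w - 1 : ℕ) : ZMod n)} := by
  rcases hs with hs | hs <;> subst hs <;>
    simp [ivE_one, ivE_neg_one, Set.pair_comm]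

/-- index of an interior element -/
lemma interior_index (hwn : w < n) (hs : s = 1 ∨ s = -1) {z : ZMod n}
    (hz : z ∈ Iv a w) (h1 : z ≠ ivE a w s) (h2 : z ≠ ivE a w (-s)) :
    ∃ i : ℕ, 0 < i ∧ i < w - 1 ∧ z = a + (i : ZMod n) := by
  obtain ⟨i, hi, rfl⟩ := hz
  have ha : a + (i : ZMod n) ≠ a := by
    rcases hs with hs | hs <;> subst hs
    · simpa [ivE_neg_one] using h2
    · simpa [ivE_neg_one] using h1
  have hb : a + (i : ZMod n) ≠ a + ((w - 1 : ℕ) : ZMod n) := by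
    rcases hs with hs | hs <;> subst hs
    · simpa [ivE_one] using h1
    · have : (- -1 : ℤ) = 1 := by norm_num
      rw [this, ivE_one] at h2; exact h2
  refine ⟨i, ?_, ?_, rfl⟩
  · rcases Nat.eq_zero_or_pos i with h | h
    · exact absurd (by simp [h]) ha
    · exact h
  · have : i ≠ w - 1 := fun h => hb (by rw [h])
    omega

omit [NeZero n] in
lemma interior_w3 {i : ℕ} (h0 : 0 < i) (h1 : i < w - 1) : 3 ≤ w := by omega

/-- full interval -/
lemma mem_Iv_all (h : w = n) (z : ZMod n) : z ∈ Iv a w := by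
  subst h
  refine ⟨(z - a).val, ZMod.val_lt _, ?_⟩
  rw [ZMod.natCast_rightInverse (z - a)]; ring

omit [NeZero n] in
lemma mem_Iv_one {z : ZMod n} (h : z ∈ Iv a 1) : z = a := by
  obtain ⟨i, hi, rfl⟩ := h
  interval_cases i; simp

end Iv

section Machine
variable {n : ℕ}

/-- mode of the corner cop -/
inductive UM (n : ℕ) where
  | corner
  | row (x : ZMod n)
  | col (y : ZMod n)
  deriving DecidableEq

/-- strategy state: corner-cop mode, x of bottom cop, y of left cop -/
abbrev MSt (n : ℕ) := UM n × ZMod n × ZMod n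

variable (xE yE xO yO dc ec : ZMod n)

def ustep (r' : Vtx n) : UM n → UM n
  | .corner => if r'.1 = xE + dc then .row (xE + dc)
      else if r'.2 = yE + ec then .col (yE + ec) else .corner
  | .row x => if r'.1 = x + dc then .row (x + dc) else .row x
  | .col y => if r'.2 = y + ec then .col (y + ec) else .col y

def posU : UM n → Vtx n
  | .corner => (xE, yE)
  | .row x => (x, yE)
  | .col y => (xE, y)

def mstep (r' : Vtx n) (s : MSt n) : MSt n :=
  (ustep xE yE dc ec r' s.1,
   (if r'.1 = s.2.1 + dc then s.2.1 + dc else s.2.1),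
   (if r'.2 = s.2.2 + ec then s.2.2 + ec else s.2.2))

def minit : MSt n := (.corner, xE, yE)

/-- position of the cop that starts at `v`, given machine state `s` -/
def copAt (v : Vtx n) (s : MSt n) : Vtx n :=
  if v = (xE, yE) then posU xE yE s.1
  else if v = (xE, yO) then (s.2.1, yO)
  else if v = (xO, yE) then (xO, s.2.2)
  else v


lemma mstep_def (r' : Vtx n) (u : UM n) (b l : ZMod n) :
    mstep xE yE dc ec r' (u, b, l)
      = (ustep xE yE dc ec r' u, if r'.1 = b + dc then b + dc else b,
         if r'.2 = l + ec then l + ec else l) := rfl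

lemma minit_def : minit xE yE = ((UM.corner : UM n), xE, yE) := rfl

end Machine

section Machine2
variable {n : ℕ} (xE yE xO yO dc ec : ZMod n)

lemma copAt_legal (δ ε : ZMod n → ℤ)
    (hyE : (δ yE : ZMod n) = dc) (hyO : (δ yO : ZMod n) = dc)
    (hxE : (ε xE : ZMod n) = ec) (hxO : (ε xO : ZMod n) = ec)
    (v : Vtx n) (s : MSt n) (r' : Vtx n) :
    Step (Adj δ ε) (copAt xE yE xO yO v s) (copAt xE yE xO yO v (mstep xE yE dc ec r' s)) := by
  obtain ⟨u, b, l⟩ := s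
  unfold copAt mstep
  by_cases hv1 : v = (xE, yE)
  · simp only [if_pos hv1]
    cases u with
    | corner =>
      simp only [ustep]
      split_ifs with h1 h2
      · exact Or.inr (Or.inl ⟨by simp [posU, hyE], rfl⟩)
      · exact Or.inr (Or.inr ⟨rfl, by simp [posU, hxE]⟩)
      · exact Or.inl rfl
    | row x =>
      simp only [ustep]
      split_ifs with h1
      · exact Or.inr (Or.inl ⟨by simp [posU, hyE], rfl⟩)
      · exact Or.inl rfl
    | col y =>
      simp only [ustep]
      split_ifs with h1
      · exact Or.inr (Or.inr ⟨rfl, by simp [posU, hxE]⟩)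
      · exact Or.inl rfl
  · simp only [if_neg hv1]
    by_cases hv2 : v = (xE, yO)
    · simp only [if_pos hv2]
      split_ifs with h1
      · exact Or.inr (Or.inl ⟨by simp [hyO], rfl⟩)
      · exact Or.inl rfl
    · simp only [if_neg hv2]
      by_cases hv3 : v = (xO, yE)
      · simp only [if_pos hv3]
        split_ifs with h1
        · exact Or.inr (Or.inr ⟨rfl, by simp [hxO]⟩)
        · exact Or.inl rfl
      · simp only [if_neg hv3]
        exact Or.inl rfl

/-- machine state after `t` robber moves -/
def stSeq (rob : ℕ → Vtx n) : ℕ → MSt n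
  | 0 => minit xE yE
  | t + 1 => mstep xE yE dc ec (rob (t + 1)) (stSeq rob t)

/-- the cop strategy -/
def strat {ι : Type*} (c₀ : ι → Vtx n) : List (Vtx n) → ι → Vtx n :=
  fun hist i =>
    copAt xE yE xO yO (c₀ i)
      ((hist.drop 1).foldl (fun s r => mstep xE yE dc ec r s) (minit xE yE))

lemma strat_bridge {ι : Type*} (c₀ : ι → Vtx n) (rob : ℕ → Vtx n) (t : ℕ) (i : ι)
    (hc : ∀ j, copAt xE yE xO yO (c₀ j) (minit xE yE) = c₀ j) :
    copsFrom (strat xE yE xO yO dc ec c₀) c₀ rob t i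
      = copAt xE yE xO yO (c₀ i) (stSeq xE yE dc ec rob t) := by
  cases t with
  | zero => exact (hc i).symm
  | succ t =>
    show strat xE yE xO yO dc ec c₀ ((List.range (t+2)).map rob) i = _
    unfold strat
    congr 1
    induction t with
    | zero => simp [List.range_succ, stSeq]
    | succ t ih =>
      rw [show t + 1 + 2 = (t + 2) + 1 by omega, List.range_succ, List.map_append,
        List.drop_append_of_le_length (by simp), List.foldl_append]
      rw [ih]
      rfl

end Machine2

section Corners
variable {n : ℕ} [NeZero n] {δ ε : ZMod n → ℤ}
  (hδ : ∀ y, PM (δ y)) (hε : ∀ x, PM (ε x))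
  {a₁ a₂ : ZMod n} {H W : ℕ}

omit [NeZero n] in
/-- characterization of undirected neighbours -/
lemma uadj_iff (v u : Vtx n) :
    UAdj δ ε v u ↔ u = (v.1 + ((δ v.2 : ℤ) : ZMod n), v.2) ∨
      u = (v.1 - ((δ v.2 : ℤ) : ZMod n), v.2) ∨
      u = (v.1, v.2 + ((ε v.1 : ℤ) : ZMod n)) ∨
      u = (v.1, v.2 - ((ε v.1 : ℤ) : ZMod n)) := by
  constructor
  · rintro (h | h)
    · rcases h with ⟨h1, h2⟩ | ⟨h1, h2⟩
      · exact Or.inl (Prod.ext h1 h2)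
      · exact Or.inr (Or.inr (Or.inl (Prod.ext h1 h2)))
    · rcases h with ⟨h1, h2⟩ | ⟨h1, h2⟩
      · rw [← h2] at h1
        exact Or.inr (Or.inl (Prod.ext (eq_sub_of_add_eq h1.symm) h2.symm))
      · rw [← h1] at h2
        exact Or.inr (Or.inr (Or.inr (Prod.ext h1.symm (eq_sub_of_add_eq h2.symm))))
  · rintro (rfl | rfl | rfl | rfl)
    · exact Or.inl (Or.inl ⟨rfl, rfl⟩)
    · exact Or.inr (Or.inl ⟨by simp, rfl⟩)
    · exact Or.inl (Or.inr ⟨rfl, rfl⟩)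
    · exact Or.inr (Or.inr ⟨rfl, by simp⟩)

end Corners

section CornersB
variable {n : ℕ} [NeZero n] {δ ε : ZMod n → ℤ} {a₁ a₂ : ZMod n} {H W : ℕ}
  {K : Set (Vtx n)}

omit [NeZero n] in
lemma ivE_width_one (a : ZMod n) (s : ℤ) : ivE a 1 s = a := by
  unfold ivE; split <;> simp

lemma one_ne_zero' (hn2 : 2 ≤ n) : (1 : ZMod n) ≠ 0 := by
  intro h
  have : ((1 : ℕ) : ZMod n) = ((0 : ℕ) : ZMod n) := by simpa using h
  have := natCast_inj_lt (by omega) (by omega) this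
  omega

lemma pm_cast_ne_zero_s5 (hn2 : 2 ≤ n) {s : ℤ} (hs : s = 1 ∨ s = -1) :
    ((s : ℤ) : ZMod n) ≠ 0 := by
  rcases hs with rfl | rfl
  · simpa using one_ne_zero' hn2
  · intro h
    apply one_ne_zero' hn2
    have : (((-1 : ℤ) : ZMod n)) = 0 := h
    push_cast at this
    linear_combination -this

omit [NeZero n] in
lemma adj_iff (v u : Vtx n) :
    Adj δ ε v u ↔ u = (v.1 + (δ v.2 : ZMod n), v.2) ∨ u = (v.1, v.2 + (ε v.1 : ZMod n)) := by
  unfold Adj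
  rw [Prod.ext_iff, Prod.ext_iff]

omit [NeZero n] in
lemma uadj_x (hδ : ∀ y, PM (δ y)) (v : Vtx n) {t : ZMod n}
    (ht : t = v.1 + 1 ∨ t = v.1 - 1) : UAdj δ ε v (t, v.2) := by
  rw [uadj_iff]
  rcases hδ v.2 with h | h <;> rw [h] <;> rcases ht with rfl | rfl
  · exact Or.inl (by push_cast; all_goals simp [sub_eq_add_neg])
  · exact Or.inr (Or.inl (by push_cast; all_goals simp [sub_eq_add_neg]))
  · exact Or.inr (Or.inl (by push_cast; all_goals simp [sub_eq_add_neg]))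
  · exact Or.inl (by push_cast; all_goals simp [sub_eq_add_neg])

omit [NeZero n] in
lemma uadj_y (hε : ∀ x, PM (ε x)) (v : Vtx n) {t : ZMod n}
    (ht : t = v.2 + 1 ∨ t = v.2 - 1) : UAdj δ ε v (v.1, t) := by
  rw [uadj_iff]
  rcases hε v.1 with h | h <;> rw [h] <;> rcases ht with rfl | rfl
  · exact Or.inr (Or.inr (Or.inl (by push_cast; all_goals simp [sub_eq_add_neg])))
  · exact Or.inr (Or.inr (Or.inr (by push_cast; all_goals simp [sub_eq_add_neg])))
  · exact Or.inr (Or.inr (Or.inr (by push_cast; all_goals simp [sub_eq_add_neg])))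
  · exact Or.inr (Or.inr (Or.inl (by push_cast; all_goals simp [sub_eq_add_neg])))

/-- existence of a horizontal neighbour inside `K` -/
lemma ex_x_nbr (hδ : ∀ y, PM (δ y)) (hWn : W < n)
    (hK : K = {p : Vtx n | p.1 ∈ Iv a₂ W ∧ p.2 ∈ Iv a₁ H})
    (h2W : 2 ≤ W) {u : Vtx n} (hu : u ∈ K) :
    ∃ p, (p ∈ K ∧ UAdj δ ε u p) ∧ p.2 = u.2 ∧ p.1 ≠ u.1 := by
  rw [hK] at hu
  obtain ⟨⟨i, hi, hieq⟩, hu2⟩ := hu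
  by_cases hiW : i + 1 < W
  · refine ⟨(a₂ + ((i+1 : ℕ) : ZMod n), u.2), ⟨?_, ?_⟩, rfl, ?_⟩
    · rw [hK]; exact ⟨⟨i+1, hiW, rfl⟩, hu2⟩
    · apply uadj_x hδ
      left; rw [hieq]; push_cast; ring
    · rw [hieq]
      intro h
      have := add_natCast_inj (by omega) (by omega) h
      omega
  · have hi1 : 1 ≤ i := by omega
    refine ⟨(a₂ + ((i-1 : ℕ) : ZMod n), u.2), ⟨?_, ?_⟩, rfl, ?_⟩
    · rw [hK]; exact ⟨⟨i-1, by omega, rfl⟩, hu2⟩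
    · apply uadj_x hδ
      right; rw [hieq, cast_pred hi1]; push_cast; ring
    · rw [hieq]
      intro h
      have := add_natCast_inj (by omega) (by omega) h
      omega

lemma ex_y_nbr (hε : ∀ x, PM (ε x)) (hHn : H < n)
    (hK : K = {p : Vtx n | p.1 ∈ Iv a₂ W ∧ p.2 ∈ Iv a₁ H})
    (h2H : 2 ≤ H) {u : Vtx n} (hu : u ∈ K) :
    ∃ p, (p ∈ K ∧ UAdj δ ε u p) ∧ p.1 = u.1 ∧ p.2 ≠ u.2 := by
  rw [hK] at hu
  obtain ⟨hu1, ⟨i, hi, hieq⟩⟩ := hu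
  by_cases hiH : i + 1 < H
  · refine ⟨(u.1, a₁ + ((i+1 : ℕ) : ZMod n)), ⟨?_, ?_⟩, rfl, ?_⟩
    · rw [hK]; exact ⟨hu1, ⟨i+1, hiH, rfl⟩⟩
    · apply uadj_y hε
      left; rw [hieq]; push_cast; ring
    · rw [hieq]
      intro h
      have := add_natCast_inj (by omega) (by omega) h
      omega
  · have hi1 : 1 ≤ i := by omega
    refine ⟨(u.1, a₁ + ((i-1 : ℕ) : ZMod n)), ⟨?_, ?_⟩, rfl, ?_⟩
    · rw [hK]; exact ⟨hu1, ⟨i-1, by omega, rfl⟩⟩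
    · apply uadj_y hε
      right; rw [hieq, cast_pred hi1]; push_cast; ring
    · rw [hieq]
      intro h
      have := add_natCast_inj (by omega) (by omega) h
      omega

/-- lower bound on the number of neighbours in `K` -/
lemma nbr_lower (hδ : ∀ y, PM (δ y)) (hε : ∀ x, PM (ε x)) (hHn : H < n) (hWn : W < n)
    (hK : K = {p : Vtx n | p.1 ∈ Iv a₂ W ∧ p.2 ∈ Iv a₁ H})
    {u : Vtx n} (hu : u ∈ K) :
    (if 2 ≤ W then 1 else 0) + (if 2 ≤ H then 1 else 0) ≤ nbrCount δ ε K u := by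
  unfold nbrCount
  split_ifs with h2W h2H h2H
  · obtain ⟨px, hpx, hpx2, hpx1⟩ := ex_x_nbr hδ hWn hK h2W hu
    obtain ⟨py, hpy, hpy1, hpy2⟩ := ex_y_nbr hε hHn hK h2H hu
    have hne : px ≠ py := by
      intro h
      apply hpx1
      rw [h, hpy1]
    have hsub : ({px, py} : Set (Vtx n)) ⊆ {w ∈ K | UAdj δ ε u w} := by
      rintro q (rfl | rfl)
      · exact hpx
      · exact hpy
    calc (2 : ℕ) = ({px, py} : Set (Vtx n)).ncard := (Set.ncard_pair hne).symm
      _ ≤ _ := Set.ncard_le_ncard hsub (Set.toFinite _)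
  · obtain ⟨px, hpx, _, _⟩ := ex_x_nbr hδ hWn hK h2W hu
    simpa [Nat.one_le_iff_ne_zero, Nat.pos_iff_ne_zero] using (Set.ncard_pos (Set.toFinite _)).mpr ⟨px, hpx⟩
  · obtain ⟨py, hpy, _, _⟩ := ex_y_nbr hε hHn hK h2H hu
    simpa [Nat.one_le_iff_ne_zero, Nat.pos_iff_ne_zero] using (Set.ncard_pos (Set.toFinite _)).mpr ⟨py, hpy⟩
  · simp

end CornersB

section CornersC
variable {n : ℕ} [NeZero n] {δ ε : ZMod n → ℤ} {a₁ a₂ : ZMod n} {H W : ℕ}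
  {K : Set (Vtx n)}

lemma ncard_le_two' {α : Type*} {s : Set α} {p q : α} (h : s ⊆ {p, q}) : s.ncard ≤ 2 :=
  le_trans (Set.ncard_le_ncard h (Set.toFinite _))
    (le_trans (Set.ncard_insert_le _ _) (by simp))

lemma ncard_le_one' {α : Type*} {s : Set α} {p : α} (h : s ⊆ {p}) : s.ncard ≤ 1 :=
  le_trans (Set.ncard_le_ncard h (Set.toFinite _)) (by simp)

lemma ncard_le_zero' {α : Type*} {s : Set α} (h : s ⊆ (∅ : Set α)) : s.ncard ≤ 0 := by
  rw [Set.subset_empty_iff] at h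
  simp [h]

lemma corner_mem (hK : K = {p : Vtx n | p.1 ∈ Iv a₂ W ∧ p.2 ∈ Iv a₁ H})
    (h1H : 1 ≤ H) (h1W : 1 ≤ W) (s t : ℤ) : (ivE a₂ W s, ivE a₁ H t) ∈ K := by
  rw [hK]; exact ⟨ivE_mem h1W, ivE_mem h1H⟩

lemma card_x_cands (hδ : ∀ y, PM (δ y)) (hn2 : 2 ≤ n) (h1W : 1 ≤ W)
    (hK : K = {p : Vtx n | p.1 ∈ Iv a₂ W ∧ p.2 ∈ Iv a₁ H})
    {v : Vtx n} (hv1 : v.1 ∈ Iv a₂ W)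
    (hx : 2 ≤ W → (v.1 + (δ a₁ : ZMod n) ∉ Iv a₂ W ∨ v.1 - (δ a₁ : ZMod n) ∉ Iv a₂ W)) :
    (K ∩ {(v.1 + (δ a₁ : ZMod n), v.2), (v.1 - (δ a₁ : ZMod n), v.2)}).ncard
      ≤ if 2 ≤ W then 1 else 0 := by
  have hpm := hδ a₁
  have hdc0 : (δ a₁ : ZMod n) ≠ 0 := pm_cast_ne_zero_s5 hn2 hpm
  split_ifs with h2W
  · rcases hx h2W with hx' | hx'
    · apply ncard_le_one' (p := (v.1 - (δ a₁ : ZMod n), v.2))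
      rintro u ⟨huK, (rfl | rfl)⟩
      · exfalso; rw [hK] at huK; exact hx' huK.1
      · rfl
    · apply ncard_le_one' (p := (v.1 + (δ a₁ : ZMod n), v.2))
      rintro u ⟨huK, (rfl | rfl)⟩
      · rfl
      · exfalso; rw [hK] at huK; exact hx' huK.1
  · have hW1 : W = 1 := by omega
    apply ncard_le_zero'
    rintro u ⟨huK, (rfl | rfl)⟩ <;> rw [hK] at huK <;> subst hW1
    · have h1 := mem_Iv_one huK.1
      have h2 := mem_Iv_one hv1
      exact hdc0 (by linear_combination h1 - h2)
    · have h1 := mem_Iv_one huK.1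
      have h2 := mem_Iv_one hv1
      exact hdc0 (by linear_combination h2 - h1)

lemma card_y_cands (hε : ∀ x, PM (ε x)) (hn2 : 2 ≤ n) (h1H : 1 ≤ H)
    (hK : K = {p : Vtx n | p.1 ∈ Iv a₂ W ∧ p.2 ∈ Iv a₁ H})
    {v : Vtx n} (hv2 : v.2 ∈ Iv a₁ H)
    (hy : 2 ≤ H → (v.2 + (ε a₂ : ZMod n) ∉ Iv a₁ H ∨ v.2 - (ε a₂ : ZMod n) ∉ Iv a₁ H)) :
    (K ∩ {(v.1, v.2 + (ε a₂ : ZMod n)), (v.1, v.2 - (ε a₂ : ZMod n))}).ncard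
      ≤ if 2 ≤ H then 1 else 0 := by
  have hpm := hε a₂
  have hec0 : (ε a₂ : ZMod n) ≠ 0 := pm_cast_ne_zero_s5 hn2 hpm
  split_ifs with h2H
  · rcases hy h2H with hy' | hy'
    · apply ncard_le_one' (p := (v.1, v.2 - (ε a₂ : ZMod n)))
      rintro u ⟨huK, (rfl | rfl)⟩
      · exfalso; rw [hK] at huK; exact hy' huK.2
      · rfl
    · apply ncard_le_one' (p := (v.1, v.2 + (ε a₂ : ZMod n)))
      rintro u ⟨huK, (rfl | rfl)⟩
      · rfl
      · exfalso; rw [hK] at huK; exact hy' huK.2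
  · have hH1 : H = 1 := by omega
    apply ncard_le_zero'
    rintro u ⟨huK, (rfl | rfl)⟩ <;> rw [hK] at huK <;> subst hH1
    · have h1 := mem_Iv_one huK.2
      have h2 := mem_Iv_one hv2
      exact hec0 (by linear_combination h1 - h2)
    · have h1 := mem_Iv_one huK.2
      have h2 := mem_Iv_one hv2
      exact hec0 (by linear_combination h2 - h1)

/-- corner ncard upper bound -/
lemma nbr_corner_le (hδ : ∀ y, PM (δ y)) (hε : ∀ x, PM (ε x)) (hn2 : 2 ≤ n)
    (h1H : 1 ≤ H) (h1W : 1 ≤ W)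
    (constδ : ∀ z ∈ Iv a₁ H, δ z = δ a₁) (constε : ∀ z ∈ Iv a₂ W, ε z = ε a₂)
    (hK : K = {p : Vtx n | p.1 ∈ Iv a₂ W ∧ p.2 ∈ Iv a₁ H})
    {v : Vtx n} (hv1 : v.1 ∈ Iv a₂ W) (hv2 : v.2 ∈ Iv a₁ H)
    (hx : 2 ≤ W → (v.1 + (δ a₁ : ZMod n) ∉ Iv a₂ W ∨ v.1 - (δ a₁ : ZMod n) ∉ Iv a₂ W))
    (hy : 2 ≤ H → (v.2 + (ε a₂ : ZMod n) ∉ Iv a₁ H ∨ v.2 - (ε a₂ : ZMod n) ∉ Iv a₁ H)) :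
    nbrCount δ ε K v ≤ (if 2 ≤ W then 1 else 0) + (if 2 ≤ H then 1 else 0) := by
  have hdc : δ v.2 = δ a₁ := constδ _ hv2
  have hec : ε v.1 = ε a₂ := constε _ hv1
  unfold nbrCount
  have hsub : {u ∈ K | UAdj δ ε v u} ⊆
      (K ∩ {(v.1 + (δ a₁ : ZMod n), v.2), (v.1 - (δ a₁ : ZMod n), v.2)}) ∪
      (K ∩ {(v.1, v.2 + (ε a₂ : ZMod n)), (v.1, v.2 - (ε a₂ : ZMod n))}) := by
    rintro u ⟨huK, huadj⟩
    rw [uadj_iff] at huadj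
    rw [hdc, hec] at huadj
    rcases huadj with rfl | rfl | rfl | rfl
    · exact Or.inl ⟨huK, Or.inl rfl⟩
    · exact Or.inl ⟨huK, Or.inr rfl⟩
    · exact Or.inr ⟨huK, Or.inl rfl⟩
    · exact Or.inr ⟨huK, Or.inr rfl⟩
  calc {u ∈ K | UAdj δ ε v u}.ncard
      ≤ _ := Set.ncard_le_ncard hsub (Set.toFinite _)
    _ ≤ _ + _ := Set.ncard_union_le _ _
    _ ≤ _ := Nat.add_le_add (card_x_cands hδ hn2 h1W hK hv1 hx) (card_y_cands hε hn2 h1H hK hv2 hy)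

end CornersC

section CornersD
variable {n : ℕ} [NeZero n] {δ ε : ZMod n → ℤ} {a₁ a₂ : ZMod n} {H W : ℕ}
  {K : Set (Vtx n)}

omit [NeZero n] in
lemma pm_neg {s : ℤ} (h : PM s) : PM (-s) := by
  rcases h with rfl | rfl
  · exact Or.inr rfl
  · exact Or.inl (by norm_num)

lemma neg_cast_eq (s : ℤ) : ((-s : ℤ) : ZMod n) = -((s : ℤ) : ZMod n) := by push_cast; ring

/-- the far end, minus direction, is outside -/
lemma ivO_sub_notMem {a : ZMod n} {w : ℕ} {s : ℤ} (hw : 1 ≤ w) (hwn : w < n)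
    (hs : s = 1 ∨ s = -1) : ivE a w (-s) - ((s : ℤ) : ZMod n) ∉ Iv a w := by
  have h := ivE_add_notMem (a := a) hw hwn (pm_neg hs)
  rwa [neg_cast_eq, ← sub_eq_add_neg] at h

/-- the far end, plus direction, is inside (if width at least 2) -/
lemma ivO_add_mem {a : ZMod n} {w : ℕ} {s : ℤ} (hw : 2 ≤ w) (hwn : w < n)
    (hs : s = 1 ∨ s = -1) : ivE a w (-s) + ((s : ℤ) : ZMod n) ∈ Iv a w := by
  have h := ivE_sub_mem (a := a) hw hwn (pm_neg hs)
  rwa [neg_neg] at h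

/-- near end minus direction is inside (if width at least 2) -/
lemma ivE_sub_mem' {a : ZMod n} {w : ℕ} {s : ℤ} (hw : 2 ≤ w) (hwn : w < n)
    (hs : s = 1 ∨ s = -1) : ivE a w s - ((s : ℤ) : ZMod n) ∈ Iv a w := by
  have h := ivE_sub_mem (a := a) hw hwn hs
  rwa [neg_cast_eq, ← sub_eq_add_neg] at h

variable (hδ : ∀ y, PM (δ y)) (hε : ∀ x, PM (ε x))
    (h1H : 1 ≤ H) (hHn : H < n) (h1W : 1 ≤ W) (hWn : W < n)
    (constδ : ∀ z ∈ Iv a₁ H, δ z = δ a₁) (constε : ∀ z ∈ Iv a₂ W, ε z = ε a₂)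
    (hK : K = {p : Vtx n | p.1 ∈ Iv a₂ W ∧ p.2 ∈ Iv a₁ H})

include hδ hε h1H hHn h1W hWn constδ constε hK in
lemma cornerU_corner : Corner δ ε K (ivE a₂ W (δ a₁), ivE a₁ H (ε a₂)) := by
  refine ⟨corner_mem hK h1H h1W _ _, fun u hu =>
    le_trans ?_ (nbr_lower hδ hε hHn hWn hK hu)⟩
  exact nbr_corner_le hδ hε (by omega) h1H h1W constδ constε hK
    (ivE_mem h1W) (ivE_mem h1H)
    (fun _ => Or.inl (ivE_add_notMem h1W hWn (hδ a₁)))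
    (fun _ => Or.inl (ivE_add_notMem h1H hHn (hε a₂)))

include hδ hε h1H hHn h1W hWn constδ constε hK in
lemma mainB (h2H : 2 ≤ H) :
    MainCorner δ ε K (ivE a₂ W (δ a₁), ivE a₁ H (-(ε a₂))) := by
  have hyO : ivE a₁ H (-(ε a₂)) ∈ Iv a₁ H := ivE_mem h1H
  have hxE : ivE a₂ W (δ a₁) ∈ Iv a₂ W := ivE_mem h1W
  constructor
  · refine ⟨corner_mem hK h1H h1W _ _, fun u hu =>
      le_trans ?_ (nbr_lower hδ hε hHn hWn hK hu)⟩
    exact nbr_corner_le hδ hε (by omega) h1H h1W constδ constε hK hxE hyO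
      (fun _ => Or.inl (ivE_add_notMem h1W hWn (hδ a₁)))
      (fun _ => Or.inr (ivO_sub_notMem h1H hHn (hε a₂)))
  · right
    have hset : {u ∈ K | Adj δ ε (ivE a₂ W (δ a₁), ivE a₁ H (-(ε a₂))) u}
        = {(ivE a₂ W (δ a₁), ivE a₁ H (-(ε a₂)) + (ε a₂ : ZMod n))} := by
      ext u
      simp only [Set.mem_setOf_eq, Set.mem_singleton_iff]
      constructor
      · rintro ⟨huK, hadj⟩
        rw [adj_iff] at hadj
        rcases hadj with rfl | rfl
        · exfalso
          rw [hK] at huK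
          have := huK.1
          simp only [constδ _ hyO] at this
          exact ivE_add_notMem h1W hWn (hδ a₁) this
        · simp [constε _ hxE]
      · rintro rfl
        refine ⟨?_, ?_⟩
        · rw [hK]
          exact ⟨hxE, ivO_add_mem h2H hHn (hε a₂)⟩
        · rw [adj_iff]
          right
          simp [constε _ hxE]
    unfold outCount
    rw [hset, Set.ncard_singleton]
    exact odd_one

include hδ hε h1H hHn h1W hWn constδ constε hK in
lemma mainL (h2W : 2 ≤ W) :
    MainCorner δ ε K (ivE a₂ W (-(δ a₁)), ivE a₁ H (ε a₂)) := by
  have hyE : ivE a₁ H (ε a₂) ∈ Iv a₁ H := ivE_mem h1H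
  have hxO : ivE a₂ W (-(δ a₁)) ∈ Iv a₂ W := ivE_mem h1W
  constructor
  · refine ⟨corner_mem hK h1H h1W _ _, fun u hu =>
      le_trans ?_ (nbr_lower hδ hε hHn hWn hK hu)⟩
    exact nbr_corner_le hδ hε (by omega) h1H h1W constδ constε hK hxO hyE
      (fun _ => Or.inr (ivO_sub_notMem h1W hWn (hδ a₁)))
      (fun _ => Or.inl (ivE_add_notMem h1H hHn (hε a₂)))
  · right
    have hset : {u ∈ K | Adj δ ε (ivE a₂ W (-(δ a₁)), ivE a₁ H (ε a₂)) u}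
        = {(ivE a₂ W (-(δ a₁)) + (δ a₁ : ZMod n), ivE a₁ H (ε a₂))} := by
      ext u
      simp only [Set.mem_setOf_eq, Set.mem_singleton_iff]
      constructor
      · rintro ⟨huK, hadj⟩
        rw [adj_iff] at hadj
        rcases hadj with rfl | rfl
        · simp [constδ _ hyE]
        · exfalso
          rw [hK] at huK
          have := huK.2
          simp only [constε _ hxO] at this
          exact ivE_add_notMem h1H hHn (hε a₂) this
      · rintro rfl
        refine ⟨?_, ?_⟩
        · rw [hK]
          exact ⟨ivO_add_mem h2W hWn (hδ a₁), hyE⟩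
        · rw [adj_iff]
          left
          simp [constδ _ hyE]
    unfold outCount
    rw [hset, Set.ncard_singleton]
    exact odd_one

include hδ hε h1H hHn h1W hWn constδ constε hK in
lemma mainU_or_sec :
    MainCorner δ ε K (ivE a₂ W (δ a₁), ivE a₁ H (ε a₂)) ∨
      SecNoOut δ ε K (ivE a₂ W (δ a₁), ivE a₁ H (ε a₂)) := by
  by_cases h : MainCorner δ ε K (ivE a₂ W (δ a₁), ivE a₁ H (ε a₂))
  · exact Or.inl h
  · refine Or.inr ⟨cornerU_corner hδ hε h1H hHn h1W hWn constδ constε hK, h, ?_⟩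
    intro u hu hadj
    rw [adj_iff] at hadj
    rw [hK] at hu
    have hyE : ivE a₁ H (ε a₂) ∈ Iv a₁ H := ivE_mem h1H
    have hxE : ivE a₂ W (δ a₁) ∈ Iv a₂ W := ivE_mem h1W
    rcases hadj with rfl | rfl
    · have := hu.1
      simp only [constδ _ hyE] at this
      exact ivE_add_notMem h1W hWn (hδ a₁) this
    · have := hu.2
      simp only [constε _ hxE] at this
      exact ivE_add_notMem h1H hHn (hε a₂) this

end CornersD

section Invariant
variable {n : ℕ} [NeZero n]

/-- The locking invariant for the three trap cops. -/
def TrapInv (xe ye xo yo dc ec : ZMod n) (a₁ a₂ : ZMod n) (H W : ℕ)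
    (rob : ℕ → Vtx n) (t : ℕ) : Prop :=
  (stSeq xe ye dc ec rob t = minit xe ye ∧ (rob t).1 ∈ Iv a₂ W ∧ (rob t).2 ∈ Iv a₁ H)
  ∨ (∃ x, stSeq xe ye dc ec rob t = (UM.row x, x, ye) ∧ (rob t).1 = x ∧
      (rob t).2 ∈ Iv a₁ H ∧ (rob t).2 ≠ ye ∧ (rob t).2 ≠ yo)
  ∨ (∃ y, stSeq xe ye dc ec rob t = (UM.col y, xe, y) ∧ (rob t).2 = y ∧
      (rob t).1 ∈ Iv a₂ W ∧ (rob t).1 ≠ xe ∧ (rob t).1 ≠ xo)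

lemma interior_ne_ivE {a : ZMod n} {w : ℕ} {s : ℤ} (hwn : w < n)
    (hs : s = 1 ∨ s = -1) {j : ℕ} (h0 : 0 < j) (h1 : j < w - 1) :
    a + (j : ZMod n) ≠ ivE a w s := by
  rcases hs with rfl | rfl
  · rw [ivE_one]
    intro h
    have := add_natCast_inj (by omega) (by omega) h
    omega
  · rw [ivE_neg_one]
    intro h
    have : a + (j : ZMod n) = a + ((0:ℕ) : ZMod n) := by simpa using h
    have := add_natCast_inj (by omega) (by omega) this
    omega

variable {δ ε : ZMod n → ℤ} {a₁ a₂ : ZMod n} {H W : ℕ}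

/-- One step of the invariant. -/
lemma trapInv_step (hδ : ∀ y, PM (δ y)) (hε : ∀ x, PM (ε x))
    (h1H : 1 ≤ H) (hHn : H < n) (h1W : 1 ≤ W) (hWn : W < n)
    (constδ : ∀ z ∈ Iv a₁ H, δ z = δ a₁) (constε : ∀ z ∈ Iv a₂ W, ε z = ε a₂)
    {xe ye xo yo dc ec : ZMod n}
    (hxe : xe = ivE a₂ W (δ a₁)) (hye : ye = ivE a₁ H (ε a₂))
    (hxo : xo = ivE a₂ W (-(δ a₁))) (hyo : yo = ivE a₁ H (-(ε a₂)))
    (hdc : dc = ((δ a₁ : ℤ) : ZMod n)) (hec : ec = ((ε a₂ : ℤ) : ZMod n))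
    (rob : ℕ → Vtx n) (t : ℕ)
    (hmv : Adj δ ε (rob t) (rob (t + 1)))
    (hU1 : posU xe ye (stSeq xe ye dc ec rob t).1 ≠ rob t)
    (hU2 : posU xe ye (stSeq xe ye dc ec rob t).1 ≠ rob (t + 1))
    (hB1 : 2 ≤ H → ((stSeq xe ye dc ec rob t).2.1, yo) ≠ rob t)
    (hB2 : 2 ≤ H → ((stSeq xe ye dc ec rob t).2.1, yo) ≠ rob (t + 1))
    (hL1 : 2 ≤ W → (xo, (stSeq xe ye dc ec rob t).2.2) ≠ rob t)
    (hL2 : 2 ≤ W → (xo, (stSeq xe ye dc ec rob t).2.2) ≠ rob (t + 1))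
    (hInv : TrapInv xe ye xo yo dc ec a₁ a₂ H W rob t) :
    TrapInv xe ye xo yo dc ec a₁ a₂ H W rob (t + 1) := by
  have hn2 : 2 ≤ n := by omega
  have hdc0 : dc ≠ 0 := hdc ▸ pm_cast_ne_zero_s5 hn2 (hδ a₁)
  have hec0 : ec ≠ 0 := hec ▸ pm_cast_ne_zero_s5 hn2 (hε a₂)
  have hNxe : xe + dc ∉ Iv a₂ W := by
    rw [hxe, hdc]; exact ivE_add_notMem h1W hWn (hδ a₁)
  have hNye : ye + ec ∉ Iv a₁ H := by
    rw [hye, hec]; exact ivE_add_notMem h1H hHn (hε a₂)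
  have hstep : stSeq xe ye dc ec rob (t+1)
      = mstep xe ye dc ec (rob (t+1)) (stSeq xe ye dc ec rob t) := rfl
  rcases hInv with ⟨hst, hr1, hr2⟩ | ⟨x, hst, hrx, hry, hrye, hryo⟩ |
    ⟨y, hst, hry', hrx', hrxe, hrxo⟩
  -- ================= PRE phase =================
  · rcases hmv with ⟨hm1, hm2⟩ | ⟨hm1, hm2⟩
    -- ----- x-move -----
    · have hδr : δ (rob t).2 = δ a₁ := constδ _ hr2
      have hm1' : (rob (t+1)).1 = (rob t).1 + dc := by rw [hm1, hδr, hdc]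
      by_cases hre : (rob t).1 = xe
      · -- trigger B
        have hr2ye : (rob t).2 ≠ ye := by
          intro h
          exact hU1 (by rw [hst]; exact (Prod.ext hre h).symm)
        have h2H : 2 ≤ H := by
          rcases Nat.lt_or_ge H 2 with h | h
          · exfalso
            have hH1 : H = 1 := by omega
            have hr2' : (rob t).2 = a₁ := mem_Iv_one (by rw [← hH1]; exact hr2)
            have hye' : ye = a₁ := by rw [hye, hH1, ivE_width_one]
            exact hr2ye (hr2'.trans hye'.symm)
          · exact h
        have hr2yo : (rob t).2 ≠ yo := by
          intro h
          exact hB1 h2H (by rw [hst]; exact (Prod.ext hre h).symm)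
        refine Or.inr (Or.inl ⟨xe + dc, ?_, ?_, ?_, ?_, ?_⟩)
        · rw [hstep, hst]
          have hc1 : (rob (t+1)).1 = xe + dc := by rw [hm1', hre]
          have hc2 : ¬ (rob (t+1)).2 = ye + ec := by
            rw [hm2]; intro h; exact hNye (h ▸ hr2)
          rw [minit_def, mstep_def]
          simp only [ustep, if_pos hc1, if_neg hc2]
        · rw [hm1', hre]
        · rw [hm2]; exact hr2
        · rw [hm2]; exact hr2ye
        · rw [hm2]; exact hr2yo
      · -- stay in K
        have hmem : (rob (t+1)).1 ∈ Iv a₂ W := by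
          rw [hm1', hdc]
          exact step_mem hWn (hδ a₁) hr1 (by rw [← hxe]; exact hre)
        have hc1 : ¬ (rob (t+1)).1 = xe + dc := by
          intro h; exact hNxe (h ▸ hmem)
        have hc2 : ¬ (rob (t+1)).2 = ye + ec := by
          rw [hm2]; intro h; exact hNye (h ▸ hr2)
        refine Or.inl ⟨?_, hmem, by rw [hm2]; exact hr2⟩
        rw [hstep, hst]
        rw [minit_def, mstep_def]
        simp only [ustep, if_neg hc1, if_neg hc2]
    -- ----- y-move -----
    · have hεr : ε (rob t).1 = ε a₂ := constε _ hr1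
      have hm2' : (rob (t+1)).2 = (rob t).2 + ec := by rw [hm2, hεr, hec]
      by_cases hre : (rob t).2 = ye
      · -- trigger A
        have hr1xe : (rob t).1 ≠ xe := by
          intro h
          exact hU1 (by rw [hst]; exact (Prod.ext h hre).symm)
        have h2W : 2 ≤ W := by
          rcases Nat.lt_or_ge W 2 with h | h
          · exfalso
            have hW1 : W = 1 := by omega
            have hr1' : (rob t).1 = a₂ := mem_Iv_one (by rw [← hW1]; exact hr1)
            have hxe' : xe = a₂ := by rw [hxe, hW1, ivE_width_one]
            exact hr1xe (hr1'.trans hxe'.symm)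
          · exact h
        have hr1xo : (rob t).1 ≠ xo := by
          intro h
          exact hL1 h2W (by rw [hst]; exact (Prod.ext h hre).symm)
        refine Or.inr (Or.inr ⟨ye + ec, ?_, ?_, ?_, ?_, ?_⟩)
        · rw [hstep, hst]
          have hc2 : (rob (t+1)).2 = ye + ec := by rw [hm2', hre]
          have hc1 : ¬ (rob (t+1)).1 = xe + dc := by
            rw [hm1]; intro h; exact hNxe (h ▸ hr1)
          rw [minit_def, mstep_def]
          simp only [ustep, if_neg hc1, if_pos hc2]
        · rw [hm2', hre]
        · rw [hm1]; exact hr1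
        · rw [hm1]; exact hr1xe
        · rw [hm1]; exact hr1xo
      · -- stay in K
        have hmem : (rob (t+1)).2 ∈ Iv a₁ H := by
          rw [hm2', hec]
          exact step_mem hHn (hε a₂) hr2 (by rw [← hye]; exact hre)
        have hc2 : ¬ (rob (t+1)).2 = ye + ec := by
          intro h; exact hNye (h ▸ hmem)
        have hc1 : ¬ (rob (t+1)).1 = xe + dc := by
          rw [hm1]; intro h; exact hNxe (h ▸ hr1)
        refine Or.inl ⟨?_, by rw [hm1]; exact hr1, hmem⟩
        rw [hstep, hst]
        rw [minit_def, mstep_def]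
        simp only [ustep, if_neg hc1, if_neg hc2]
  -- ================= LOCK B (row) phase =================
  · obtain ⟨i, hi0, hiH, hieq⟩ :=
      interior_index (a := a₁) (w := H) hHn (hε a₂) hry
        (by rw [← hye]; exact hrye) (by rw [← hyo]; exact hryo)
    have h3H : 3 ≤ H := interior_w3 hi0 hiH
    rcases hmv with ⟨hm1, hm2⟩ | ⟨hm1, hm2⟩
    -- ----- x-move: cops follow -----
    · have hδr : δ (rob t).2 = δ a₁ := constδ _ hry
      have hm1' : (rob (t+1)).1 = x + dc := by rw [hm1, hδr, ← hdc, hrx]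
      refine Or.inr (Or.inl ⟨x + dc, ?_, ?_, ?_, ?_, ?_⟩)
      · rw [hstep, hst]
        have hc2 : ¬ (rob (t+1)).2 = ye + ec := by
          rw [hm2]; intro h; exact hNye (h ▸ hry)
        rw [mstep_def]
        simp only [ustep, if_pos hm1', if_neg hc2]
      · exact hm1'
      · rw [hm2]; exact hry
      · rw [hm2]; exact hrye
      · rw [hm2]; exact hryo
    -- ----- y-move -----
    · have hsr := hε (rob t).1
      -- landing index
      have hland : ∃ j : ℕ, j < H ∧ (rob (t+1)).2 = a₁ + (j : ZMod n) ∧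
          (j = 0 ∨ j = H - 1 ∨ (0 < j ∧ j < H - 1)) := by
        rcases hsr with h | h
        · refine ⟨i + 1, by omega, ?_, by omega⟩
          rw [hm2, h, hieq]; push_cast; ring
        · refine ⟨i - 1, by omega, ?_, by omega⟩
          rw [hm2, h, hieq, cast_pred (by omega)]; push_cast; ring
      obtain ⟨j, hjH, hjeq, hjcase⟩ := hland
      -- if the landing is an end, the robber is captured: contradiction
      have hposU : posU xe ye (stSeq xe ye dc ec rob t).1 = (x, ye) := by
        rw [hst]; rfl
      have hposB : (((stSeq xe ye dc ec rob t).2.1 : ZMod n), yo) = (x, yo) := by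
        rw [hst]
      have hends : (rob (t+1)).2 ≠ ye ∧ (rob (t+1)).2 ≠ yo := by
        constructor
        · intro h
          exact hU2 (by rw [hposU]; exact (Prod.ext (by rw [hm1, hrx]) h).symm)
        · intro h
          exact hB2 (by omega) (by rw [hposB]; exact (Prod.ext (by rw [hm1, hrx]) h).symm)
      have hjint : 0 < j ∧ j < H - 1 := by
        rcases hjcase with rfl | rfl | h
        · exfalso
          have : (rob (t+1)).2 = a₁ := by simpa using hjeq
          rcases hε a₂ with h | h
          · exact hends.2 (by rw [this, hyo, h, show -(1:ℤ) = -1 from rfl, ivE_neg_one])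
          · exact hends.1 (by rw [this, hye, h, ivE_neg_one])
        · exfalso
          rcases hε a₂ with h | h
          · exact hends.1 (by rw [hjeq, hye, h, ivE_one])
          · exact hends.2 (by
              rw [hjeq, hyo, h, show -(-1:ℤ) = 1 from rfl, ivE_one])
        · exact h
      have hmem : (rob (t+1)).2 ∈ Iv a₁ H := by
        rw [hjeq]; exact mem_Iv_of_lt hjH
      refine Or.inr (Or.inl ⟨x, ?_, by rw [hm1]; exact hrx, hmem, ?_, ?_⟩)
      · rw [hstep, hst]
        have hc1 : ¬ (rob (t+1)).1 = x + dc := by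
          rw [hm1, hrx]
          intro h
          exact hdc0 (by linear_combination -h)
        have hc2 : ¬ (rob (t+1)).2 = ye + ec := by
          intro h; exact hNye (h ▸ hmem)
        rw [mstep_def]
        simp only [ustep, if_neg hc1, if_neg hc2]
      · rw [hjeq, hye]
        exact interior_ne_ivE hHn (hε a₂) hjint.1 hjint.2
      · rw [hjeq, hyo]
        exact interior_ne_ivE hHn (pm_neg (hε a₂)) hjint.1 hjint.2
  -- ================= LOCK A (column) phase =================
  · obtain ⟨i, hi0, hiW, hieq⟩ :=
      interior_index (a := a₂) (w := W) hWn (hδ a₁) hrx'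
        (by rw [← hxe]; exact hrxe) (by rw [← hxo]; exact hrxo)
    have h3W : 3 ≤ W := interior_w3 hi0 hiW
    rcases hmv with ⟨hm1, hm2⟩ | ⟨hm1, hm2⟩
    -- ----- x-move -----
    · have hsr := hδ (rob t).2
      have hland : ∃ j : ℕ, j < W ∧ (rob (t+1)).1 = a₂ + (j : ZMod n) ∧
          (j = 0 ∨ j = W - 1 ∨ (0 < j ∧ j < W - 1)) := by
        rcases hsr with h | h
        · refine ⟨i + 1, by omega, ?_, by omega⟩
          rw [hm1, h, hieq]; push_cast; ring
        · refine ⟨i - 1, by omega, ?_, by omega⟩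
          rw [hm1, h, hieq, cast_pred (by omega)]; push_cast; ring
      obtain ⟨j, hjW, hjeq, hjcase⟩ := hland
      have hposU : posU xe ye (stSeq xe ye dc ec rob t).1 = (xe, y) := by
        rw [hst]; rfl
      have hposL : ((xo : ZMod n), (stSeq xe ye dc ec rob t).2.2) = (xo, y) := by
        rw [hst]
      have hends : (rob (t+1)).1 ≠ xe ∧ (rob (t+1)).1 ≠ xo := by
        constructor
        · intro h
          exact hU2 (by rw [hposU]; exact (Prod.ext h (by rw [hm2, hry'])).symm)
        · intro h
          exact hL2 (by omega) (by rw [hposL]; exact (Prod.ext h (by rw [hm2, hry'])).symm)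
      have hjint : 0 < j ∧ j < W - 1 := by
        rcases hjcase with rfl | rfl | h
        · exfalso
          have : (rob (t+1)).1 = a₂ := by simpa using hjeq
          rcases hδ a₁ with h | h
          · exact hends.2 (by rw [this, hxo, h, show -(1:ℤ) = -1 from rfl, ivE_neg_one])
          · exact hends.1 (by rw [this, hxe, h, ivE_neg_one])
        · exfalso
          rcases hδ a₁ with h | h
          · exact hends.1 (by rw [hjeq, hxe, h, ivE_one])
          · exact hends.2 (by
              rw [hjeq, hxo, h, show -(-1:ℤ) = 1 from rfl, ivE_one])
        · exact h
      have hmem : (rob (t+1)).1 ∈ Iv a₂ W := by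
        rw [hjeq]; exact mem_Iv_of_lt hjW
      refine Or.inr (Or.inr ⟨y, ?_, by rw [hm2]; exact hry', hmem, ?_, ?_⟩)
      · rw [hstep, hst]
        have hc2 : ¬ (rob (t+1)).2 = y + ec := by
          rw [hm2, hry']
          intro h
          exact hec0 (by linear_combination -h)
        have hc1 : ¬ (rob (t+1)).1 = xe + dc := by
          intro h; exact hNxe (h ▸ hmem)
        rw [mstep_def]
        simp only [ustep, if_neg hc2, if_neg hc1]
      · rw [hjeq, hxe]
        exact interior_ne_ivE hWn (hδ a₁) hjint.1 hjint.2
      · rw [hjeq, hxo]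
        exact interior_ne_ivE hWn (pm_neg (hδ a₁)) hjint.1 hjint.2
    -- ----- y-move: cops follow -----
    · have hεr : ε (rob t).1 = ε a₂ := constε _ hrx'
      have hm2' : (rob (t+1)).2 = y + ec := by rw [hm2, hεr, ← hec, hry']
      refine Or.inr (Or.inr ⟨y + ec, ?_, ?_, ?_, ?_, ?_⟩)
      · rw [hstep, hst]
        have hc1 : ¬ (rob (t+1)).1 = xe + dc := by
          rw [hm1]; intro h; exact hNxe (h ▸ hrx')
        rw [mstep_def]
        simp only [ustep, if_pos hm2', if_neg hc1]
      · exact hm2'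
      · rw [hm1]; exact hrx'
      · rw [hm1]; exact hrxe
      · rw [hm1]; exact hrxo

end Invariant

section Core
variable {n : ℕ} [NeZero n]

lemma ivE_ne_neg {a : ZMod n} {w : ℕ} {s : ℤ} (hw : 2 ≤ w) (hwn : w < n)
    (hs : s = 1 ∨ s = -1) : ivE a w s ≠ ivE a w (-s) := by
  have key : a + ((w - 1 : ℕ) : ZMod n) ≠ a := by
    intro h
    have : a + ((w - 1 : ℕ) : ZMod n) = a + ((0 : ℕ) : ZMod n) := by simpa using h
    have := add_natCast_inj (by omega) (by omega) this
    omega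
  rcases hs with rfl | rfl
  · rw [ivE_one, ivE_neg_one]
    exact key
  · rw [ivE_neg_one, show -(-1 : ℤ) = 1 by norm_num, ivE_one]
    exact fun h => key h.symm

lemma ustep_col_is_col (xe ye dc ec : ZMod n) (r' : Vtx n) (y : ZMod n) :
    ∃ y', ustep xe ye dc ec r' (UM.col y) = UM.col y' := by
  simp only [ustep]
  split_ifs
  · exact ⟨y + ec, rfl⟩
  · exact ⟨y, rfl⟩

lemma ustep_row_is_row (xe ye dc ec : ZMod n) (r' : Vtx n) (x : ZMod n) :
    ∃ x', ustep xe ye dc ec r' (UM.row x) = UM.row x' := by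
  simp only [ustep]
  split_ifs
  · exact ⟨x + dc, rfl⟩
  · exact ⟨x, rfl⟩

lemma stSeq_succ_fst (xe ye dc ec : ZMod n) (rob : ℕ → Vtx n) (t : ℕ) :
    (stSeq xe ye dc ec rob (t + 1)).1
      = ustep xe ye dc ec (rob (t + 1)) ((stSeq xe ye dc ec rob t).1) := rfl

variable {δ ε : ZMod n → ℤ} {a₁ a₂ : ZMod n} {H W : ℕ}

lemma trap_core (hδ : ∀ y, PM (δ y)) (hε : ∀ x, PM (ε x))
    (h1H : 1 ≤ H) (hHn : H < n) (h1W : 1 ≤ W) (hWn : W < n)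
    (constδ : ∀ z ∈ Iv a₁ H, δ z = δ a₁) (constε : ∀ z ∈ Iv a₂ W, ε z = ε a₂)
    {ι : Type*} (c₀ : ι → Vtx n)
    (hc0U : ∃ i, c₀ i = (ivE a₂ W (δ a₁), ivE a₁ H (ε a₂)))
    (hc0B : 2 ≤ H → ∃ i, c₀ i = (ivE a₂ W (δ a₁), ivE a₁ H (-(ε a₂))))
    (hc0L : 2 ≤ W → ∃ i, c₀ i = (ivE a₂ W (-(δ a₁)), ivE a₁ H (ε a₂)))
    (r₀ : Vtx n) (hr1 : r₀.1 ∈ Iv a₂ W) (hr2 : r₀.2 ∈ Iv a₁ H) :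
    ∃ σ : List (Vtx n) → ι → Vtx n,
      ∀ rob : ℕ → Vtx n, rob 0 = r₀ → (∀ t, Adj δ ε (rob t) (rob (t + 1))) →
        (∀ t i, Step (Adj δ ε) (copsFrom σ c₀ rob t i) (copsFrom σ c₀ rob (t + 1) i)) ∧
        (Captured (copsFrom σ c₀ rob) rob ∨
          (∃ T, ∀ t, T ≤ t → (rob t).2 ∈ Iv a₁ H) ∨
          (∃ T, ∀ t, T ≤ t → (rob t).1 ∈ Iv a₂ W)) := by
  classical
  have hn2 : 2 ≤ n := by omega
  set xe := ivE a₂ W (δ a₁) with hxe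
  set ye := ivE a₁ H (ε a₂) with hye
  set xo := ivE a₂ W (-(δ a₁)) with hxo
  set yo := ivE a₁ H (-(ε a₂)) with hyo
  set dc := ((δ a₁ : ℤ) : ZMod n) with hdc
  set ec := ((ε a₂ : ℤ) : ZMod n) with hec
  refine ⟨strat xe ye xo yo dc ec c₀, ?_⟩
  intro rob hrob0 hmv
  have hyEc : ((δ ye : ℤ) : ZMod n) = dc := by rw [constδ _ (ivE_mem h1H)]
  have hyOc : ((δ yo : ℤ) : ZMod n) = dc := by rw [constδ _ (ivE_mem h1H)]
  have hxEc : ((ε xe : ℤ) : ZMod n) = ec := by rw [constε _ (ivE_mem h1W)]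
  have hxOc : ((ε xo : ℤ) : ZMod n) = ec := by rw [constε _ (ivE_mem h1W)]
  have hinit : ∀ j, copAt xe ye xo yo (c₀ j) (minit xe ye) = c₀ j := by
    intro j
    unfold copAt
    split_ifs with h1 h2 h3
    · rw [h1]; rfl
    · rw [h2]; rfl
    · rw [h3]; rfl
    · rfl
  have hbr : ∀ t i, copsFrom (strat xe ye xo yo dc ec c₀) c₀ rob t i
      = copAt xe ye xo yo (c₀ i) (stSeq xe ye dc ec rob t) :=
    fun t i => strat_bridge xe ye xo yo dc ec c₀ rob t i hinit
  refine ⟨?_, ?_⟩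
  · intro t i
    rw [hbr t i, hbr (t + 1) i]
    exact copAt_legal xe ye xo yo dc ec δ ε hyEc hyOc hxEc hxOc (c₀ i) _ _
  by_cases hC : Captured (copsFrom (strat xe ye xo yo dc ec c₀) c₀ rob) rob
  · exact Or.inl hC
  right
  unfold Captured at hC
  push_neg at hC
  obtain ⟨iU, hiU⟩ := hc0U
  have hU : ∀ t, posU xe ye (stSeq xe ye dc ec rob t).1 ≠ rob t ∧
      posU xe ye (stSeq xe ye dc ec rob t).1 ≠ rob (t + 1) := by
    intro t
    have h := hC t iU
    rw [hbr t iU, hiU] at h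
    unfold copAt at h
    rw [if_pos rfl] at h
    exact h
  have hB : ∀ h2H : 2 ≤ H, ∀ t,
      (((stSeq xe ye dc ec rob t).2.1 : ZMod n), yo) ≠ rob t ∧
      (((stSeq xe ye dc ec rob t).2.1 : ZMod n), yo) ≠ rob (t + 1) := by
    intro h2H t
    obtain ⟨iB, hiB⟩ := hc0B h2H
    have hne : ((xe, yo) : Vtx n) ≠ (xe, ye) := by
      intro h
      exact ivE_ne_neg h2H hHn (hε a₂) (congrArg Prod.snd h).symm
    have h := hC t iB
    rw [hbr t iB, hiB] at h
    unfold copAt at h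
    rw [if_neg hne, if_pos rfl] at h
    exact h
  have hL : ∀ h2W : 2 ≤ W, ∀ t,
      ((xo : ZMod n), (stSeq xe ye dc ec rob t).2.2) ≠ rob t ∧
      ((xo : ZMod n), (stSeq xe ye dc ec rob t).2.2) ≠ rob (t + 1) := by
    intro h2W t
    obtain ⟨iL, hiL⟩ := hc0L h2W
    have hxexo : xe ≠ xo := ivE_ne_neg h2W hWn (hδ a₁)
    have hne1 : ((xo, ye) : Vtx n) ≠ (xe, ye) := by
      intro h
      exact hxexo (congrArg Prod.fst h).symm
    have hne2 : ((xo, ye) : Vtx n) ≠ (xe, yo) := by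
      intro h
      exact hxexo (congrArg Prod.fst h).symm
    have h := hC t iL
    rw [hbr t iL, hiL] at h
    unfold copAt at h
    rw [if_neg hne1, if_neg hne2, if_pos rfl] at h
    exact h
  have hInv : ∀ t, TrapInv xe ye xo yo dc ec a₁ a₂ H W rob t := by
    intro t
    induction t with
    | zero =>
      exact Or.inl ⟨rfl, by rw [hrob0]; exact hr1, by rw [hrob0]; exact hr2⟩
    | succ t ih =>
      exact trapInv_step hδ hε h1H hHn h1W hWn constδ constε hxe hye hxo hyo hdc hec
        rob t (hmv t) (hU t).1 (hU t).2 (fun h2H => (hB h2H t).1) (fun h2H => (hB h2H t).2)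
        (fun h2W => (hL h2W t).1) (fun h2W => (hL h2W t).2) ih
  by_cases hA : ∃ t y, (stSeq xe ye dc ec rob t).1 = UM.col y
  · obtain ⟨t₀, y₀, ht₀⟩ := hA
    right
    refine ⟨t₀, fun t ht => ?_⟩
    obtain ⟨k, rfl⟩ := Nat.exists_eq_add_of_le ht
    have hcol : ∀ s : ℕ, ∃ y', (stSeq xe ye dc ec rob (t₀ + s)).1 = UM.col y' := by
      intro s
      induction s with
      | zero => exact ⟨y₀, ht₀⟩
      | succ s ih =>
        obtain ⟨y', hy'⟩ := ih
        rw [show t₀ + (s + 1) = (t₀ + s) + 1 by omega, stSeq_succ_fst, hy']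
        exact ustep_col_is_col xe ye dc ec _ y'
    obtain ⟨y', hy'⟩ := hcol k
    rcases hInv (t₀ + k) with ⟨hst, _, _⟩ | ⟨x, hst, _⟩ | ⟨y, hst, _, hmem, _⟩
    · rw [congrArg Prod.fst hst] at hy'
      exact absurd hy' (by simp [minit_def])
    · rw [congrArg Prod.fst hst] at hy'
      exact absurd hy' (by simp)
    · exact hmem
  · push_neg at hA
    left
    by_cases hR : ∃ t x', (stSeq xe ye dc ec rob t).1 = UM.row x'
    · obtain ⟨t₀, x₀, ht₀⟩ := hR
      refine ⟨t₀, fun t ht => ?_⟩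
      obtain ⟨k, rfl⟩ := Nat.exists_eq_add_of_le ht
      have hrow : ∀ s : ℕ, ∃ x', (stSeq xe ye dc ec rob (t₀ + s)).1 = UM.row x' := by
        intro s
        induction s with
        | zero => exact ⟨x₀, ht₀⟩
        | succ s ih =>
          obtain ⟨x', hx'⟩ := ih
          rw [show t₀ + (s + 1) = (t₀ + s) + 1 by omega, stSeq_succ_fst, hx']
          exact ustep_row_is_row xe ye dc ec _ x'
      obtain ⟨x', hx'⟩ := hrow k
      rcases hInv (t₀ + k) with ⟨hst, _, _⟩ | ⟨x, hst, _, hmem, _⟩ | ⟨y, hst, _⟩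
      · rw [congrArg Prod.fst hst] at hx'
        exact absurd hx' (by simp [minit_def])
      · exact hmem
      · rw [congrArg Prod.fst hst] at hx'
        exact absurd hx' (by simp)
    · push_neg at hR
      refine ⟨0, fun t _ => ?_⟩
      rcases hInv t with ⟨_, _, hmem⟩ | ⟨x, hst, _⟩ | ⟨y, hst, _⟩
      · exact hmem
      · exact absurd (congrArg Prod.fst hst) (by simpa using hR t x)
      · exact absurd (congrArg Prod.fst hst) (by simpa using hA t y)

end Core

/-- (Lemma `trap2`.)  In the forced-move game, if the cops
occupy all main corners of a conflux `K` together with the secondary corner of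
`K` without out-neighbours in `K` (if such a corner exists), and the robber is
in `K`, then the cops can guarantee that the robber is captured or confined to
a stream containing `K`. -/
theorem trap_two
    (n : ℕ) (hn : 1 ≤ n) (δ ε : ZMod n → ℤ)
    (hδ : ∀ y, PM (δ y)) (hε : ∀ x, PM (ε x))
    (S₁ S₂ : Strm n δ ε) (h₁ : S₁.vert = true) (h₂ : S₂.vert = false)
    (K : Set (Vtx n)) (hK : K = S₁.verts ∩ S₂.verts) (hKne : K.Nonempty)
    (r₀ : Vtx n) (hr : r₀ ∈ K) :
    EnsureFrom (Adj δ ε) (Adj δ ε)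
      (Sum.elim (fun i : {v : Vtx n // MainCorner δ ε K v} => i.val)
                (fun i : {v : Vtx n // SecNoOut δ ε K v} => i.val)) r₀
      (fun cops rob => Captured cops rob ∨
        ∃ S : Strm n δ ε, K ⊆ S.verts ∧ ∃ T, ∀ t, T ≤ t → rob t ∈ S.verts) := by
  classical
  haveI : NeZero n := ⟨by omega⟩
  set c₀ : {v : Vtx n // MainCorner δ ε K v} ⊕ {v : Vtx n // SecNoOut δ ε K v} → Vtx n :=
    Sum.elim (fun i => i.val) (fun i => i.val) with hc₀
  have hv1 : ∀ p : Vtx n, p ∈ S₁.verts ↔ p.2 ∈ Iv S₁.a S₁.w := by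
    intro p
    simp [Strm.verts, Strm.proj, h₁, Iv]
  have hv2 : ∀ p : Vtx n, p ∈ S₂.verts ↔ p.1 ∈ Iv S₂.a S₂.w := by
    intro p
    simp [Strm.verts, Strm.proj, h₂, Iv]
  by_cases hH : S₁.w = n
  · -- the column stream is everything: cops stay put
    refine ⟨fun _ => c₀, fun rob hrob0 hmv => ⟨?_, ?_⟩⟩
    · intro t i
      left
      cases t <;> rfl
    · right
      refine ⟨S₁, by rw [hK]; exact Set.inter_subset_left, 0, fun t _ => ?_⟩
      rw [hv1]
      exact mem_Iv_all hH _
  by_cases hW : S₂.w = n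
  · refine ⟨fun _ => c₀, fun rob hrob0 hmv => ⟨?_, ?_⟩⟩
    · intro t i
      left
      cases t <;> rfl
    · right
      refine ⟨S₂, by rw [hK]; exact Set.inter_subset_right, 0, fun t _ => ?_⟩
      rw [hv2]
      exact mem_Iv_all hW _
  -- main case
  have h1H : 1 ≤ S₁.w := S₁.one_le
  have h1W : 1 ≤ S₂.w := S₂.one_le
  have hHn : S₁.w < n := lt_of_le_of_ne S₁.le_n hH
  have hWn : S₂.w < n := lt_of_le_of_ne S₂.le_n hW
  have constδ : ∀ z ∈ Iv S₁.a S₁.w, δ z = δ S₁.a := by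
    rintro z ⟨i, hi, rfl⟩
    have := S₁.const i hi
    rwa [h₁] at this
  have constε : ∀ z ∈ Iv S₂.a S₂.w, ε z = ε S₂.a := by
    rintro z ⟨i, hi, rfl⟩
    have := S₂.const i hi
    rwa [h₂] at this
  have hK' : K = {p : Vtx n | p.1 ∈ Iv S₂.a S₂.w ∧ p.2 ∈ Iv S₁.a S₁.w} := by
    rw [hK]
    ext p
    rw [Set.mem_inter_iff, hv1, hv2]
    exact and_comm
  have hc0U : ∃ i, c₀ i = (ivE S₂.a S₂.w (δ S₁.a), ivE S₁.a S₁.w (ε S₂.a)) := by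
    rcases mainU_or_sec hδ hε h1H hHn h1W hWn constδ constε hK' with h | h
    · exact ⟨Sum.inl ⟨_, h⟩, rfl⟩
    · exact ⟨Sum.inr ⟨_, h⟩, rfl⟩
  have hc0B : 2 ≤ S₁.w →
      ∃ i, c₀ i = (ivE S₂.a S₂.w (δ S₁.a), ivE S₁.a S₁.w (-(ε S₂.a))) := by
    intro h2H
    exact ⟨Sum.inl ⟨_, mainB hδ hε h1H hHn h1W hWn constδ constε hK' h2H⟩, rfl⟩
  have hc0L : 2 ≤ S₂.w →
      ∃ i, c₀ i = (ivE S₂.a S₂.w (-(δ S₁.a)), ivE S₁.a S₁.w (ε S₂.a)) := by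
    intro h2W
    exact ⟨Sum.inl ⟨_, mainL hδ hε h1H hHn h1W hWn constδ constε hK' h2W⟩, rfl⟩
  have hr' : r₀.1 ∈ Iv S₂.a S₂.w ∧ r₀.2 ∈ Iv S₁.a S₁.w := by
    rw [hK'] at hr
    exact hr
  obtain ⟨σ, hσ⟩ := trap_core hδ hε h1H hHn h1W hWn constδ constε c₀ hc0U hc0B hc0L
    r₀ hr'.1 hr'.2
  refine ⟨σ, fun rob hrob0 hmv => ?_⟩
  obtain ⟨hleg, hcase⟩ := hσ rob hrob0 hmv
  refine ⟨hleg, ?_⟩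
  rcases hcase with h | ⟨T, hT⟩ | ⟨T, hT⟩
  · exact Or.inl h
  · refine Or.inr ⟨S₁, by rw [hK]; exact Set.inter_subset_left, T, fun t ht => ?_⟩
    rw [hv1]
    exact hT t ht
  · refine Or.inr ⟨S₂, by rw [hK]; exact Set.inter_subset_right, T, fun t ht => ?_⟩
    rw [hv2]
    exact hT t ht

end CopsPaper
end
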